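/- arXiv:1909.09747 — 9 statements merged into one kernel-verified Lean document; each statement's English description precedes it below -/
import Mathlib

section
/- Let H be a real Hilbert space, γ, κ > 0, and let B : H → H be κ-cocoercive with resolvent J_{γB}. Then J_{γB} is θ-averaged with θ = 1/(2(1 + κ/γ)); that is, there exists a nonexpansive map R : H → H such that J_{γB} = (1 − θ)·Id + θ·R. -/
open RealInnerProductSpace

theorem fdrf_stmt2 {H : Type*} [NormedAddCommGroup H] [InnerProductSpace ℝ H] [CompleteSpace H]
    (γ κ : ℝ) (hγ : 0 < γ) (hκ : 0 < κ) (B J : H → H)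
    (hB : ∀ x y : H, κ * ‖B x - B y‖ ^ 2 ≤ ⟪x - y, B x - B y⟫)
    (hJ : ∀ x : H, x = J x + γ • B (J x)) :
    ∃ R : H → H, (∀ x y : H, ‖R x - R y‖ ≤ ‖x - y‖) ∧
      ∀ x : H, J x = (1 - 1 / (2 * (1 + κ / γ))) • x + (1 / (2 * (1 + κ / γ))) • R x := by
  set θ : ℝ := 1 / (2 * (1 + κ / γ)) with hθdef
  have hμ : 0 < κ / γ := div_pos hκ hγ
  have hθpos : 0 < θ := by
    have : 0 < 2 * (1 + κ / γ) := by linarith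
    exact one_div_pos.mpr this
  have hθeq : 2 * θ * (1 + κ / γ) = 1 := by
    rw [hθdef]; field_simp
  refine ⟨fun x => θ⁻¹ • (J x - (1 - θ) • x), ?_, ?_⟩
  · intro x y
    set u := J x - J y with hu
    set v := γ • (B (J x) - B (J y)) with hv
    have hw : x - y = u + v := by
      rw [hu, hv]
      nth_rewrite 1 [hJ x, hJ y]
      rw [smul_sub]
      abel
    have hiv : (κ / γ) * ‖v‖ ^ 2 ≤ ⟪u, v⟫ := by
      have h1 := hB (J x) (J y)
      have h2 : ⟪u, v⟫ = γ * ⟪J x - J y, B (J x) - B (J y)⟫ := by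
        rw [hu, hv, real_inner_smul_right]
      have h3 : ‖v‖ = γ * ‖B (J x) - B (J y)‖ := by
        rw [hv, norm_smul, Real.norm_eq_abs, abs_of_pos hγ]
      rw [h2, h3]
      have : (κ / γ) * (γ * ‖B (J x) - B (J y)‖) ^ 2 = γ * (κ * ‖B (J x) - B (J y)‖ ^ 2) := by
        field_simp
      rw [this]
      exact mul_le_mul_of_nonneg_left h1 hγ.le
    have hdiff : θ⁻¹ • (J x - (1 - θ) • x) - θ⁻¹ • (J y - (1 - θ) • y)
        = θ⁻¹ • (u - (1 - θ) • (x - y)) := by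
      module
    rw [hdiff, norm_smul, Real.norm_eq_abs, abs_of_pos (inv_pos.mpr hθpos)]
    rw [inv_mul_le_iff₀ hθpos]
    have hsq : ‖u - (1 - θ) • (x - y)‖ ^ 2 ≤ (θ * ‖x - y‖) ^ 2 := by
      rw [hw]
      have e1 : ‖u - (1 - θ) • (u + v)‖ ^ 2
          = ‖u‖ ^ 2 - 2 * ((1 - θ) * ⟪u, u + v⟫) + (1 - θ) ^ 2 * ‖u + v‖ ^ 2 := by
        rw [norm_sub_sq_real, real_inner_smul_right, norm_smul, Real.norm_eq_abs,
          mul_pow, sq_abs]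
      have e2 : ⟪u, u + v⟫ = ‖u‖ ^ 2 + ⟪u, v⟫ := by
        rw [inner_add_right, real_inner_self_eq_norm_sq]
      have e3 : ‖u + v‖ ^ 2 = ‖u‖ ^ 2 + 2 * ⟪u, v⟫ + ‖v‖ ^ 2 := norm_add_sq_real u v
      rw [e1, e2, e3, mul_pow]
      nlinarith [sq_nonneg ‖v‖, sq_nonneg ‖u‖, hθpos, hμ, hiv, hθeq,
        mul_le_mul_of_nonneg_left hiv (le_of_lt (mul_pos two_pos hθpos))]
    have hnn : 0 ≤ θ * ‖x - y‖ := mul_nonneg hθpos.le (norm_nonneg _)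
    nlinarith [norm_nonneg (u - (1 - θ) • (x - y)), hsq, hnn]
  · intro x
    rw [smul_smul, mul_inv_cancel₀ hθpos.ne', one_smul]
    abel
end

section
/- Let H be a real Hilbert space, let A, B : H → Set H be maximally monotone with resolvents J_{γA}, J_{γB}, let C : H → H be monotone and μ-Lipschitz with μ > 0, and let γ ∈ (0, 1/μ). Define T : H → H by T z = (Id − γC)(J_{γA}(2 J_{γB} z − z − γ C(J_{γB} z))) + z − (Id − γC)(J_{γB} z). Then zer(A + B + C) = J_{γB}(Fix T), where Fix T = {z ∈ H : T z = z} and zer(A + B + C) = {x ∈ H : 0 ∈ A x + B x + C x} (Minkowski sum). -/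
open RealInnerProductSpace Pointwise

lemma res_unique' {H : Type*} [NormedAddCommGroup H] [InnerProductSpace ℝ H]
    (B : H → Set H)
    (hBmono : ∀ x y u v : H, u ∈ B x → v ∈ B y → 0 ≤ ⟪x - y, u - v⟫)
    {γ : ℝ} (hγ0 : 0 < γ) {z x y : H}
    (hx : z - x ∈ γ • B x) (hy : z - y ∈ γ • B y) : x = y := by
  obtain ⟨u, hu, huu⟩ := hx
  obtain ⟨v, hv, hvv⟩ := hy
  have huu' : γ • u = z - x := huu
  have hvv' : γ • v = z - y := hvv
  have h := hBmono x y u v hu hv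
  have huv : γ • (u - v) = y - x := by rw [smul_sub, huu', hvv']; abel
  have huv2 : u - v = γ⁻¹ • (y - x) := by
    rw [← huv, smul_smul, inv_mul_cancel₀ hγ0.ne', one_smul]
  rw [huv2, real_inner_smul_right] at h
  have hxy : ⟪x - y, y - x⟫ = -‖x - y‖ ^ 2 := by
    rw [show y - x = -(x - y) by abel, inner_neg_right, real_inner_self_eq_norm_sq]
  rw [hxy] at h
  have hinv : 0 < γ⁻¹ := inv_pos.mpr hγ0
  have hs0 : 0 ≤ -‖x - y‖ ^ 2 := by
    by_contra hc
    push_neg at hc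
    nlinarith
  have hsq : ‖x - y‖ ^ 2 = 0 := le_antisymm (by linarith) (sq_nonneg _)
  have h0 : ‖x - y‖ = 0 := pow_eq_zero_iff (two_ne_zero) |>.mp hsq
  exact sub_eq_zero.mp (norm_eq_zero.mp h0)

theorem fdrf_stmt3 {H : Type*} [NormedAddCommGroup H] [InnerProductSpace ℝ H] [CompleteSpace H]
    (A B : H → Set H)
    (hAmono : ∀ x y u v : H, u ∈ A x → v ∈ A y → 0 ≤ ⟪x - y, u - v⟫)
    (hAmax : ∀ x u : H, (∀ y v : H, v ∈ A y → 0 ≤ ⟪x - y, u - v⟫) → u ∈ A x)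
    (hBmono : ∀ x y u v : H, u ∈ B x → v ∈ B y → 0 ≤ ⟪x - y, u - v⟫)
    (hBmax : ∀ x u : H, (∀ y v : H, v ∈ B y → 0 ≤ ⟪x - y, u - v⟫) → u ∈ B x)
    (γ μ : ℝ) (hμ : 0 < μ) (hγ0 : 0 < γ) (hγ : γ < 1 / μ)
    (JA JB : H → H)
    (hJA : ∀ x : H, x - JA x ∈ γ • A (JA x))
    (hJB : ∀ x : H, x - JB x ∈ γ • B (JB x))
    (C : H → H)
    (hCmono : ∀ x y : H, 0 ≤ ⟪x - y, C x - C y⟫)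
    (hClip : ∀ x y : H, ‖C x - C y‖ ≤ μ * ‖x - y‖)
    (T : H → H)
    (hT : ∀ z : H, T z =
      (JA ((2 : ℝ) • JB z - z - γ • C (JB z))
          - γ • C (JA ((2 : ℝ) • JB z - z - γ • C (JB z))))
        + z - (JB z - γ • C (JB z))) :
    {x : H | (0 : H) ∈ A x + B x + ({C x} : Set H)} = JB '' {z : H | T z = z} := by
  have hγμ : γ * μ < 1 := by
    rw [lt_div_iff₀ hμ] at hγ; linarith
  -- injectivity of Id - γC
  have hinj : ∀ w x : H, w - γ • C w = x - γ • C x → w = x := by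
    intro w x hwx
    by_contra h
    have h1 : w - x = γ • C w - γ • C x := sub_eq_sub_iff_sub_eq_sub.mp hwx
    rw [← smul_sub] at h1
    have h2 : ‖w - x‖ = γ * ‖C w - C x‖ := by
      rw [h1, norm_smul, Real.norm_of_nonneg hγ0.le]
    have h3 := hClip w x
    have h4 : 0 < ‖w - x‖ := norm_pos_iff.mpr (sub_ne_zero.mpr h)
    nlinarith
  ext x
  simp only [Set.mem_setOf_eq, Set.mem_image]
  constructor
  · rintro h0
    obtain ⟨p, hp, q, hq, hpq⟩ := h0
    obtain ⟨a, ha, b, hb, hab⟩ := hp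
    rw [Set.mem_singleton_iff] at hq
    subst hq
    have hab' : a + b = p := hab
    have hpq' : p + C x = 0 := hpq
    have habc : a + b + C x = 0 := by rw [hab']; exact hpq'
    set z := x + γ • b with hz
    have hJBz : JB z = x := by
      refine res_unique' B hBmono hγ0 (hJB z) ?_
      have hzx : z - x = γ • b := by rw [hz]; abel
      rw [hzx]
      exact Set.smul_mem_smul_set hb
    have haeq : a = -b - C x := by
      rw [← sub_eq_zero, ← habc]; abel
    have hwa : (2 : ℝ) • x - z - γ • C x - x = γ • a := by
      rw [haeq, hz, smul_sub, smul_neg, two_smul]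
      abel
    have hJAw : JA ((2 : ℝ) • x - z - γ • C x) = x := by
      refine res_unique' A hAmono hγ0 (hJA ((2 : ℝ) • x - z - γ • C x)) ?_
      rw [hwa]
      exact Set.smul_mem_smul_set ha
    refine ⟨z, ?_, hJBz⟩
    show T z = z
    rw [hT z, hJBz, hJAw]
    abel
  · rintro ⟨z, hz, hJBz⟩
    have hz' : T z = z := hz
    rw [hT z, hJBz] at hz'
    set w := JA ((2 : ℝ) • x - z - γ • C x) with hw
    have hwx : w - γ • C w = x - γ • C x := by
      rw [← sub_eq_zero]
      rw [← sub_eq_zero] at hz'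
      rw [← hz']; abel
    have hweq : w = x := hinj w x hwx
    have hA : (2 : ℝ) • x - z - γ • C x - x ∈ γ • A x := by
      have h := hJA ((2 : ℝ) • x - z - γ • C x)
      rw [← hw, hweq] at h
      exact h
    obtain ⟨a, ha, haa⟩ := hA
    have haa' : γ • a = (2 : ℝ) • x - z - γ • C x - x := haa
    have hB : z - x ∈ γ • B x := by
      have h := hJB z
      rw [hJBz] at h
      exact h
    obtain ⟨b, hb, hbb⟩ := hB
    have hbb' : γ • b = z - x := hbb
    have hsum : γ • (a + b + C x) = 0 := by
      rw [smul_add, smul_add, haa', hbb', two_smul]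
      abel
    have habc : a + b + C x = 0 := by
      rcases smul_eq_zero.mp hsum with h | h
      · exact absurd h hγ0.ne'
      · exact h
    exact ⟨a + b, ⟨a, ha, b, hb, rfl⟩, C x, rfl, habc⟩
end

section
/- Let H be a real Hilbert space, let A : H → Set H be monotone, let C : H → H be monotone, and let γ > 0. Suppose z, z⋆, x, y, x⋆ ∈ H satisfy 2x − z − γ C x − y ∈ γ A y and x⋆ − z⋆ − γ C x⋆ ∈ γ A x⋆ (i.e., the second set is the set {γ a : a ∈ A x⋆}). Define u = x − z + z⋆ − x⋆ and z⁺ = z + y − x − γ(C y − C x). Then ‖z⁺ − z⋆‖² ≤ ‖x − x⋆‖² − ‖x − y‖² + γ²‖C x − C y‖² − 2γ⟪C x − C y, u⟫ + ‖u‖². -/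
open RealInnerProductSpace Pointwise

theorem fdrf_stmt6 {H : Type*} [NormedAddCommGroup H] [InnerProductSpace ℝ H] [CompleteSpace H]
    (A : H → Set H)
    (hAmono : ∀ x y u v : H, u ∈ A x → v ∈ A y → 0 ≤ ⟪x - y, u - v⟫)
    (C : H → H)
    (hCmono : ∀ x y : H, 0 ≤ ⟪x - y, C x - C y⟫)
    (γ : ℝ) (hγ : 0 < γ)
    (z zs x y xs : H)
    (hy : (2 : ℝ) • x - z - γ • C x - y ∈ γ • A y)
    (hxs : xs - zs - γ • C xs ∈ γ • A xs)
    (u zp : H)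
    (hu : u = x - z + zs - xs)
    (hzp : zp = z + y - x - γ • (C y - C x)) :
    ‖zp - zs‖ ^ 2 ≤ ‖x - xs‖ ^ 2 - ‖x - y‖ ^ 2 + γ ^ 2 * ‖C x - C y‖ ^ 2
      - 2 * γ * ⟪C x - C y, u⟫ + ‖u‖ ^ 2 := by
  obtain ⟨a, ha, hga⟩ := hy
  obtain ⟨b, hb, hgb⟩ := hxs
  beta_reduce at hga hgb
  have h1 : 0 ≤ γ * ⟪y - xs, a - b⟫ := mul_nonneg hγ.le (hAmono y xs a b ha hb)
  have h2 : 0 ≤ γ * ⟪y - xs, C y - C xs⟫ := mul_nonneg hγ.le (hCmono y xs)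
  have e1 : γ * ⟪y - xs, a - b⟫ = ⟪y - xs, γ • a - γ • b⟫ := by
    rw [← smul_sub, real_inner_smul_right]
  rw [e1, hga, hgb] at h1
  subst hu hzp
  have key : 0 ≤ ⟪y - xs, ((2:ℝ) • x - z - γ • C x - y) - (xs - zs - γ • C xs)⟫
      + γ * ⟪y - xs, C y - C xs⟫ := add_nonneg h1 h2
  have e2 : ∀ w : H, ⟪w, w⟫ = ‖w‖ ^ 2 := fun w => real_inner_self_eq_norm_sq w
  have iden : ‖(z + y - x - γ • (C y - C x)) - zs‖ ^ 2
      = ‖x - xs‖ ^ 2 - ‖x - y‖ ^ 2 + γ ^ 2 * ‖C x - C y‖ ^ 2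
        - 2 * γ * ⟪C x - C y, x - z + zs - xs⟫ + ‖x - z + zs - xs‖ ^ 2
        - 2 * (⟪y - xs, ((2:ℝ) • x - z - γ • C x - y) - (xs - zs - γ • C xs)⟫
          + γ * ⟪y - xs, C y - C xs⟫) := by
    simp only [← e2, inner_sub_left, inner_sub_right, inner_add_left, inner_add_right,
      real_inner_smul_left, real_inner_smul_right, real_inner_comm]
    ring
  rw [iden]
  linarith [key]
end

section
/- Let H be a real Hilbert space, let A : H → Set H be monotone, let B : H → H be κ-cocoercive with κ > 0 and resolvent J_{γB}, let C : H → H be monotone and μ-Lipschitz with μ > 0, and let γ > 0 and ε' ∈ (0, 1). Suppose z, z⋆, y ∈ H satisfy, with x = J_{γB} z and x⋆ = J_{γB} z⋆: 2x − z − γ C x − y ∈ γ A y and x⋆ − z⋆ − γ C x⋆ ∈ γ A x⋆. Define u = x − z + z⋆ − x⋆, z⁺ = z + y − x − γ(C y − C x), and ε = 1 − γ²μ²(1 + γ/(2κ(1 − ε'))). Then ‖z⁺ − z⋆‖² ≤ ‖z − z⋆‖² − ε‖x − y‖² − (2κε'/γ)‖u‖². -/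
open RealInnerProductSpace Pointwise

set_option maxHeartbeats 1000000


/-- Pure scalar core inequality. -/
theorem scalar_aux (γ κ μ ε' ww pp dd cc wd pd wc pc dc wc2 pc2 nu nc nw : ℝ)
    (hγ : 0 < γ) (hκ : 0 < κ) (hε'0 : 0 < ε') (hε'1 : ε' < 1) (hμ : 0 < μ)
    (hnu : 0 ≤ nu) (hnc : 0 ≤ nc) (hnw : 0 ≤ nw)
    (hnu2 : nu ^ 2 = dd - 2 * pd + pp)
    (hnc2 : nc ^ 2 = cc) (hnw2 : nw ^ 2 = ww)
    (hA : ww + wd + pd - pp + γ * wc2 + γ * pc2 ≤ 0)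
    (hC : 0 ≤ wc + wc2 + pc + pc2)
    (hB : κ * (dd - 2 * pd + pp) ≤ γ * (pd - pp))
    (hL : nc ≤ μ * nw)
    (hCS : pc - dc ≤ nu * nc) :
    dd + ww + γ ^ 2 * cc + 2 * wd - 2 * γ * dc - 2 * γ * wc ≤
      dd - (1 - γ ^ 2 * μ ^ 2 * (1 + γ / (2 * κ * (1 - ε')))) * ww
        - (2 * κ * ε' / γ) * (dd - 2 * pd + pp) := by
  have h1 : (0:ℝ) < 1 - ε' := by linarith
  have hK : (0:ℝ) < 2 * κ * (1 - ε') := by positivity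
  have hγK : (0:ℝ) < γ * (2 * κ * (1 - ε')) := by positivity
  have f1 : 0 ≤ (γ * (2 * κ * (1 - ε'))) * (-(ww + wd + pd - pp + γ * wc2 + γ * pc2)) :=
    mul_nonneg hγK.le (by linarith)
  have f2 : 0 ≤ (γ ^ 2 * (2 * κ * (1 - ε'))) * (wc + wc2 + pc + pc2) :=
    mul_nonneg (by positivity) hC
  have f3 : (2 * (2 * κ * (1 - ε'))) * (κ * (dd - 2 * pd + pp))
      ≤ (2 * (2 * κ * (1 - ε'))) * (γ * (pd - pp)) :=
    mul_le_mul_of_nonneg_left hB (by positivity)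
  have f4 : (2 * γ ^ 2 * (2 * κ * (1 - ε'))) * (pc - dc)
      ≤ (2 * γ ^ 2 * (2 * κ * (1 - ε'))) * (nu * nc) :=
    mul_le_mul_of_nonneg_left hCS (by positivity)
  have f5 : 0 ≤ (2 * κ * (1 - ε')) ^ 2 * (dd - 2 * pd + pp)
      - 2 * (2 * κ * (1 - ε')) * γ ^ 2 * (nu * nc) + γ ^ 4 * cc := by
    have e : ((2 * κ * (1 - ε')) * nu - γ ^ 2 * nc) ^ 2
        = (2 * κ * (1 - ε')) ^ 2 * (dd - 2 * pd + pp)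
          - 2 * (2 * κ * (1 - ε')) * γ ^ 2 * (nu * nc) + γ ^ 4 * cc := by
      rw [← hnu2, ← hnc2]; ring
    rw [← e]; exact sq_nonneg _
  have f6 : cc ≤ μ ^ 2 * ww := by nlinarith [mul_self_le_mul_self hnc hL]
  have f7 : (γ ^ 3 * ((2 * κ * (1 - ε')) + γ)) * cc
      ≤ (γ ^ 3 * ((2 * κ * (1 - ε')) + γ)) * (μ ^ 2 * ww) :=
    mul_le_mul_of_nonneg_left f6 (by positivity)
  have hP : (dd + ww + γ ^ 2 * cc + 2 * wd - 2 * γ * dc - 2 * γ * wc) * (γ * (2 * κ * (1 - ε')))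
      ≤ γ * (2 * κ * (1 - ε')) * dd - γ * (2 * κ * (1 - ε')) * ww
        + γ ^ 3 * μ ^ 2 * ((2 * κ * (1 - ε')) + γ) * ww
        - 2 * κ * ε' * (2 * κ * (1 - ε')) * (dd - 2 * pd + pp) := by
    linarith [f1, f2, f3, f4, f5, f7]
  have hEq : (dd - (1 - γ ^ 2 * μ ^ 2 * (1 + γ / (2 * κ * (1 - ε')))) * ww
        - (2 * κ * ε' / γ) * (dd - 2 * pd + pp)) * (γ * (2 * κ * (1 - ε')))
      = γ * (2 * κ * (1 - ε')) * dd - γ * (2 * κ * (1 - ε')) * ww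
        + γ ^ 3 * μ ^ 2 * ((2 * κ * (1 - ε')) + γ) * ww
        - 2 * κ * ε' * (2 * κ * (1 - ε')) * (dd - 2 * pd + pp) := by
    field_simp
    ring
  exact (mul_le_mul_iff_of_pos_right hγK).mp (by rw [hEq]; exact hP)


open RealInnerProductSpace Pointwise




theorem vector_aux {H : Type*} [NormedAddCommGroup H] [InnerProductSpace ℝ H]
    (γ κ μ ε' : ℝ) (hγ : 0 < γ) (hκ : 0 < κ) (hμ : 0 < μ)
    (hε'0 : 0 < ε') (hε'1 : ε' < 1)
    (d p w c c2 : H)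
    (hA : 0 ≤ ⟪w + p, -w - (d - p) - γ • c2⟫)
    (hC : 0 ≤ ⟪w + p, c + c2⟫)
    (hB : κ * ‖d - p‖ ^ 2 ≤ γ * ⟪p, d - p⟫)
    (hL : ‖c‖ ≤ μ * ‖w‖) :
    ‖d + w - γ • c‖ ^ 2 ≤ ‖d‖ ^ 2
      - (1 - γ ^ 2 * μ ^ 2 * (1 + γ / (2 * κ * (1 - ε')))) * ‖w‖ ^ 2
      - (2 * κ * ε' / γ) * ‖d - p‖ ^ 2 := by
  have hnu2 : ‖d - p‖ ^ 2 = ⟪d,d⟫ - 2 * ⟪p,d⟫ + ⟪p,p⟫ := by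
    rw [← real_inner_self_eq_norm_sq]
    simp only [inner_sub_left, inner_sub_right]
    rw [real_inner_comm d p]; ring
  have hnc2 : ‖c‖ ^ 2 = ⟪c,c⟫ := (real_inner_self_eq_norm_sq c).symm
  have hnw2 : ‖w‖ ^ 2 = ⟪w,w⟫ := (real_inner_self_eq_norm_sq w).symm
  have hnd2 : ‖d‖ ^ 2 = ⟪d,d⟫ := (real_inner_self_eq_norm_sq d).symm
  have hA' : ⟪w,w⟫ + ⟪w,d⟫ + ⟪p,d⟫ - ⟪p,p⟫ + γ * ⟪w,c2⟫ + γ * ⟪p,c2⟫ ≤ 0 := by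
    have e : ⟪w + p, -w - (d - p) - γ • c2⟫
        = -(⟪w,w⟫ + ⟪w,d⟫ + ⟪p,d⟫ - ⟪p,p⟫ + γ * ⟪w,c2⟫ + γ * ⟪p,c2⟫) := by
      simp only [inner_add_left, inner_sub_right, inner_neg_right, real_inner_smul_right]
      rw [real_inner_comm p w]; ring
    rw [e] at hA; linarith
  have hC' : 0 ≤ ⟪w,c⟫ + ⟪w,c2⟫ + ⟪p,c⟫ + ⟪p,c2⟫ := by
    have e : ⟪w + p, c + c2⟫ = ⟪w,c⟫ + ⟪w,c2⟫ + ⟪p,c⟫ + ⟪p,c2⟫ := by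
      simp only [inner_add_left, inner_add_right]; ring
    rwa [e] at hC
  have hB' : κ * (⟪d,d⟫ - 2 * ⟪p,d⟫ + ⟪p,p⟫) ≤ γ * (⟪p,d⟫ - ⟪p,p⟫) := by
    have e : ⟪p, d - p⟫ = ⟪p,d⟫ - ⟪p,p⟫ := by
      simp only [inner_sub_right]
    rw [← e, ← hnu2]; exact hB
  have hCS : ⟪p,c⟫ - ⟪d,c⟫ ≤ ‖d - p‖ * ‖c‖ := by
    have e : ⟪p - d, c⟫ = ⟪p,c⟫ - ⟪d,c⟫ := by simp only [inner_sub_left]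
    have := real_inner_le_norm (p - d) c
    rw [e, norm_sub_rev] at this; exact this
  have egoal : ‖d + w - γ • c‖ ^ 2
      = ⟪d,d⟫ + ⟪w,w⟫ + γ ^ 2 * ⟪c,c⟫ + 2 * ⟪w,d⟫ - 2 * γ * ⟪d,c⟫ - 2 * γ * ⟪w,c⟫ := by
    rw [← real_inner_self_eq_norm_sq]
    simp only [inner_add_left, inner_add_right, inner_sub_left, inner_sub_right,
      real_inner_smul_left, real_inner_smul_right]
    rw [real_inner_comm d w, real_inner_comm c d, real_inner_comm c w]; ring
  rw [egoal, hnd2, hnw2, hnu2]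
  exact scalar_aux γ κ μ ε' ⟪w,w⟫ ⟪p,p⟫ ⟪d,d⟫ ⟪c,c⟫ ⟪w,d⟫ ⟪p,d⟫ ⟪w,c⟫ ⟪p,c⟫ ⟪d,c⟫
    ⟪w,c2⟫ ⟪p,c2⟫ ‖d - p‖ ‖c‖ ‖w‖ hγ hκ hε'0 hε'1 hμ (norm_nonneg _) (norm_nonneg _)
    (norm_nonneg _) hnu2 hnc2 hnw2 hA' hC' hB' hL hCS


theorem fdrf_stmt7 {H : Type*} [NormedAddCommGroup H] [InnerProductSpace ℝ H] [CompleteSpace H]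
    (A : H → Set H)
    (hAmono : ∀ x y u v : H, u ∈ A x → v ∈ A y → 0 ≤ ⟪x - y, u - v⟫)
    (γ κ μ ε' : ℝ) (hγ : 0 < γ) (hκ : 0 < κ) (hμ : 0 < μ)
    (hε'0 : 0 < ε') (hε'1 : ε' < 1)
    (B : H → H)
    (hB : ∀ x y : H, κ * ‖B x - B y‖ ^ 2 ≤ ⟪x - y, B x - B y⟫)
    (JB : H → H) (hJB : ∀ x : H, x = JB x + γ • B (JB x))
    (C : H → H)
    (hCmono : ∀ x y : H, 0 ≤ ⟪x - y, C x - C y⟫)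
    (hClip : ∀ x y : H, ‖C x - C y‖ ≤ μ * ‖x - y‖)
    (z zs y : H) (x xs : H) (hxdef : x = JB z) (hxsdef : xs = JB zs)
    (hy : (2 : ℝ) • x - z - γ • C x - y ∈ γ • A y)
    (hxs : xs - zs - γ • C xs ∈ γ • A xs)
    (u zp : H) (hu : u = x - z + zs - xs)
    (hzp : zp = z + y - x - γ • (C y - C x)) :
    ‖zp - zs‖ ^ 2 ≤ ‖z - zs‖ ^ 2
      - (1 - γ ^ 2 * μ ^ 2 * (1 + γ / (2 * κ * (1 - ε')))) * ‖x - y‖ ^ 2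
      - (2 * κ * ε' / γ) * ‖u‖ ^ 2 := by
  have hz : z = x + γ • B x := by rw [hxdef]; exact hJB z
  have hzs : zs = xs + γ • B xs := by rw [hxsdef]; exact hJB zs
  have hdp : (z - zs) - (x - xs) = γ • (B x - B xs) := by
    rw [hz, hzs, smul_sub]; abel
  -- monotonicity of A
  obtain ⟨ay, hay, hayeq⟩ := Set.mem_smul_set.mp hy
  obtain ⟨as, has, haseq⟩ := Set.mem_smul_set.mp hxs
  have h0 := hAmono y xs ay as hay has
  have h1 : 0 ≤ ⟪y - xs, γ • ay - γ • as⟫ := by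
    rw [← smul_sub, real_inner_smul_right]
    exact mul_nonneg hγ.le h0
  rw [hayeq, haseq] at h1
  have hA : 0 ≤ ⟪(y - x) + (x - xs),
      -(y - x) - ((z - zs) - (x - xs)) - γ • (C x - C xs)⟫ := by
    rw [show (y - x) + (x - xs) = y - xs from by abel,
      show -(y - x) - ((z - zs) - (x - xs)) - γ • (C x - C xs)
        = ((2 : ℝ) • x - z - γ • C x - y) - (xs - zs - γ • C xs) from by module]
    exact h1
  -- monotonicity of C
  have hC : 0 ≤ ⟪(y - x) + (x - xs), (C y - C x) + (C x - C xs)⟫ := by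
    rw [show (y - x) + (x - xs) = y - xs from by abel,
      show (C y - C x) + (C x - C xs) = C y - C xs from by abel]
    exact hCmono y xs
  -- cocoercivity of B
  have hBv : κ * ‖(z - zs) - (x - xs)‖ ^ 2 ≤ γ * ⟪x - xs, (z - zs) - (x - xs)⟫ := by
    rw [hdp, norm_smul, real_inner_smul_right, Real.norm_eq_abs, abs_of_pos hγ]
    have h2 := mul_le_mul_of_nonneg_left (hB x xs) (le_of_lt (by positivity : (0:ℝ) < γ ^ 2))
    nlinarith [h2]
  have hzpz : zp - zs = (z - zs) + (y - x) - γ • (C y - C x) := by rw [hzp]; abel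
  have hxy : ‖x - y‖ = ‖y - x‖ := norm_sub_rev x y
  have huu : ‖u‖ = ‖(z - zs) - (x - xs)‖ := by
    rw [hu, show x - z + zs - xs = -((z - zs) - (x - xs)) from by abel, norm_neg]
  rw [hzpz, hxy, huu]
  exact vector_aux γ κ μ ε' hγ hκ hμ hε'0 hε'1 (z - zs) (x - xs) (y - x)
    (C y - C x) (C x - C xs) hA hC hBv (hClip y x)
end

section
/- Let H be a real Hilbert space, let A : H → Set H be monotone, let V ⊆ H be a closed linear subspace with orthogonal projection P_V, let C₁ : H → H be a map such that C := P_V ∘ C₁ ∘ P_V is monotone and μ-Lipschitz with μ > 0, and let γ > 0. Suppose z, z⋆, y ∈ H satisfy, with x = P_V z and x⋆ = P_V z⋆: 2x − z − γ C x − y ∈ γ A y and x⋆ − z⋆ − γ C x⋆ ∈ γ A x⋆. Define z⁺ = z + y − x − γ(C y − C x). Then ‖z⁺ − z⋆‖² ≤ ‖z − z⋆‖² − (1 − γ²μ²)‖x − y‖². -/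
open RealInnerProductSpace Pointwise

theorem fdrf_stmt8 {H : Type*} [NormedAddCommGroup H] [InnerProductSpace ℝ H] [CompleteSpace H]
    (A : H → Set H)
    (hAmono : ∀ x y u v : H, u ∈ A x → v ∈ A y → 0 ≤ ⟪x - y, u - v⟫)
    (γ μ : ℝ) (hγ : 0 < γ) (hμ : 0 < μ)
    (V : Submodule ℝ H) (hV : IsClosed (V : Set H))
    (P : H → H) (hP : ∀ x : H, P x ∈ V ∧ x - P x ∈ Vᗮ)
    (C₁ : H → H) (C : H → H) (hCdef : ∀ x : H, C x = P (C₁ (P x)))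
    (hCmono : ∀ x y : H, 0 ≤ ⟪x - y, C x - C y⟫)
    (hClip : ∀ x y : H, ‖C x - C y‖ ≤ μ * ‖x - y‖)
    (z zs y : H) (x xs : H) (hxdef : x = P z) (hxsdef : xs = P zs)
    (hy : (2 : ℝ) • x - z - γ • C x - y ∈ γ • A y)
    (hxs : xs - zs - γ • C xs ∈ γ • A xs)
    (zp : H) (hzp : zp = z + y - x - γ • (C y - C x)) :
    ‖zp - zs‖ ^ 2 ≤ ‖z - zs‖ ^ 2 - (1 - γ ^ 2 * μ ^ 2) * ‖x - y‖ ^ 2 := by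
  obtain ⟨u, hu, huγ⟩ := Set.mem_smul_set.mp hy
  obtain ⟨v, hv, hvγ⟩ := Set.mem_smul_set.mp hxs
  have hF1 : 0 ≤ ⟪y - xs, ((2 : ℝ) • x - z - γ • C x - y) - (xs - zs - γ • C xs)⟫ := by
    rw [← huγ, ← hvγ, ← smul_sub, real_inner_smul_right]
    exact mul_nonneg hγ.le (hAmono y xs u v hu hv)
  have hF2 : 0 ≤ ⟪y - xs, γ • C y - γ • C xs⟫ := by
    rw [← smul_sub, real_inner_smul_right]
    exact mul_nonneg hγ.le (hCmono y xs)
  have hxV : x ∈ V := by rw [hxdef]; exact (hP z).1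
  have hxsV : xs ∈ V := by rw [hxsdef]; exact (hP zs).1
  have hCV : ∀ w : H, γ • C w ∈ V := fun w => V.smul_mem γ (by rw [hCdef]; exact (hP _).1)
  have hzx : z - x ∈ Vᗮ := by rw [hxdef]; exact (hP z).2
  have hzsxs : zs - xs ∈ Vᗮ := by rw [hxsdef]; exact (hP zs).2
  have hoz : ∀ a ∈ V, ⟪a, z - x⟫ = 0 := fun a ha => (Submodule.mem_orthogonal V (z - x)).mp hzx a ha
  have hozs : ∀ a ∈ V, ⟪a, zs - xs⟫ = 0 := fun a ha => (Submodule.mem_orthogonal V (zs - xs)).mp hzsxs a ha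
  have o1 : ⟪x, z - x⟫ = 0 := hoz x hxV
  have o2 : ⟪xs, z - x⟫ = 0 := hoz xs hxsV
  have o3 : ⟪γ • C x, z - x⟫ = 0 := hoz _ (hCV x)
  have o4 : ⟪γ • C y, z - x⟫ = 0 := hoz _ (hCV y)
  have o5 : ⟪γ • C xs, z - x⟫ = 0 := hoz _ (hCV xs)
  have p1 : ⟪x, zs - xs⟫ = 0 := hozs x hxV
  have p2 : ⟪xs, zs - xs⟫ = 0 := hozs xs hxsV
  have p3 : ⟪γ • C x, zs - xs⟫ = 0 := hozs _ (hCV x)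
  have p4 : ⟪γ • C y, zs - xs⟫ = 0 := hozs _ (hCV y)
  have p5 : ⟪γ • C xs, zs - xs⟫ = 0 := hozs _ (hCV xs)
  have hkey : ⟪z - zs, (y - x) - γ • (C y - C x)⟫ + ‖y - x‖ ^ 2 - ⟪y - x, γ • (C y - C x)⟫ ≤ 0 := by
    have hn : ‖y - x‖ ^ 2 = ⟪y - x, y - x⟫ := (real_inner_self_eq_norm_sq _).symm
    rw [hn, smul_sub]
    simp only [inner_sub_left, inner_sub_right, inner_add_left, inner_add_right, two_smul] at hF1 hF2 o1 o2 o3 o4 o5 p1 p2 p3 p4 p5 ⊢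
    linarith [real_inner_comm z zs, real_inner_comm z x, real_inner_comm z xs, real_inner_comm z y, real_inner_comm z (γ • C x), real_inner_comm z (γ • C y), real_inner_comm z (γ • C xs), real_inner_comm zs x, real_inner_comm zs xs, real_inner_comm zs y, real_inner_comm zs (γ • C x), real_inner_comm zs (γ • C y), real_inner_comm zs (γ • C xs), real_inner_comm x xs, real_inner_comm x y, real_inner_comm x (γ • C x), real_inner_comm x (γ • C y), real_inner_comm x (γ • C xs), real_inner_comm xs y, real_inner_comm xs (γ • C x), real_inner_comm xs (γ • C y), real_inner_comm xs (γ • C xs), real_inner_comm y (γ • C x), real_inner_comm y (γ • C y), real_inner_comm y (γ • C xs), real_inner_comm (γ • C x) (γ • C y), real_inner_comm (γ • C x) (γ • C xs), real_inner_comm (γ • C y) (γ • C xs)]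
  have hw : ‖C y - C x‖ ≤ μ * ‖y - x‖ := hClip y x
  have hw2 : ‖C y - C x‖ ^ 2 ≤ μ ^ 2 * ‖y - x‖ ^ 2 := by
    nlinarith [norm_nonneg (C y - C x), norm_nonneg (y - x)]
  have hw3 : γ ^ 2 * ‖C y - C x‖ ^ 2 ≤ γ ^ 2 * (μ ^ 2 * ‖y - x‖ ^ 2) :=
    mul_le_mul_of_nonneg_left hw2 (sq_nonneg γ)
  have hd : zp - zs = (z - zs) + ((y - x) - γ • (C y - C x)) := by rw [hzp]; abel
  have hd2 : ‖(y - x) - γ • (C y - C x)‖ ^ 2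
      = ‖y - x‖ ^ 2 - 2 * ⟪y - x, γ • (C y - C x)⟫ + γ ^ 2 * ‖C y - C x‖ ^ 2 := by
    rw [norm_sub_sq_real, norm_smul, Real.norm_eq_abs, mul_pow, sq_abs]
  have hxy : ‖x - y‖ = ‖y - x‖ := norm_sub_rev x y
  rw [hd, norm_add_sq_real, hd2, hxy]
  nlinarith [hkey]
end

section
/- Let γ > 0, μ > 0, and ω ∈ (0, π). In H = ℝ², let J_A : ℝ² → ℝ² be the zero map, let B(x, y) = (γ⁻¹ cot(ω/2) y, −γ⁻¹ cot(ω/2) x), let C(x, y) = (μ y, −μ x), and let J_{γB} = (Id + γB)⁻¹, i.e., J_{γB}(x, y) = (sin²(ω/2) x − sin(ω/2)cos(ω/2) y, sin(ω/2)cos(ω/2) x + sin²(ω/2) y). Then the map T z = (Id − γC)(J_A(2 J_{γB} z − z − γ C(J_{γB} z))) + z − (Id − γC)(J_{γB} z) is the linear map T(x, y) = (a x + b y, −b x + a y) with a = (1/2)(1 + cos ω + γμ sin ω) and b = (1/2)(γμ − γμ cos ω + sin ω). -/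
theorem fdrf_stmt12 (γ μ ω : ℝ) (hγ : 0 < γ) (hμ : 0 < μ)
    (hω0 : 0 < ω) (hωπ : ω < Real.pi)
    (JA B C JB : ℝ × ℝ → ℝ × ℝ)
    (hJA : ∀ p : ℝ × ℝ, JA p = 0)
    (hB : ∀ p : ℝ × ℝ, B p =
      (γ⁻¹ * (Real.cos (ω / 2) / Real.sin (ω / 2)) * p.2,
       -(γ⁻¹ * (Real.cos (ω / 2) / Real.sin (ω / 2))) * p.1))
    (hC : ∀ p : ℝ × ℝ, C p = (μ * p.2, -(μ * p.1)))
    (hJBinv : ∀ p : ℝ × ℝ, JB p + γ • B (JB p) = p)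
    (hJB : ∀ p : ℝ × ℝ, JB p =
      (Real.sin (ω / 2) ^ 2 * p.1 - Real.sin (ω / 2) * Real.cos (ω / 2) * p.2,
       Real.sin (ω / 2) * Real.cos (ω / 2) * p.1 + Real.sin (ω / 2) ^ 2 * p.2)) :
    ∀ p : ℝ × ℝ,
      (JA ((2 : ℝ) • JB p - p - γ • C (JB p))
          - γ • C (JA ((2 : ℝ) • JB p - p - γ • C (JB p))))
        + p - (JB p - γ • C (JB p))
      = ((1 / 2) * (1 + Real.cos ω + γ * μ * Real.sin ω) * p.1
            + (1 / 2) * (γ * μ - γ * μ * Real.cos ω + Real.sin ω) * p.2,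
         -((1 / 2) * (γ * μ - γ * μ * Real.cos ω + Real.sin ω)) * p.1
            + (1 / 2) * (1 + Real.cos ω + γ * μ * Real.sin ω) * p.2) := by
  intro p
  have hc : Real.cos ω = 1 - 2 * Real.sin (ω / 2) ^ 2 := by
    have h := Real.cos_two_mul (ω / 2)
    rw [show 2 * (ω / 2) = ω by ring] at h
    nlinarith [Real.sin_sq_add_cos_sq (ω / 2)]
  have hs : Real.sin ω = 2 * Real.sin (ω / 2) * Real.cos (ω / 2) := by
    rw [← Real.sin_two_mul]; ring_nf
  simp only [hJA, hC, hJB, Prod.ext_iff, Prod.smul_mk, Prod.mk_add_mk,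
    Prod.mk_sub_mk, smul_eq_mul, Prod.fst_add, Prod.snd_add, Prod.fst_sub,
    Prod.snd_sub, Prod.fst_zero, Prod.snd_zero]
  constructor <;> (rw [hc, hs]; ring)
end

section
/- For every γ > 0 there exist μ > 0, set-valued operators A, B : ℝ² → Set ℝ² that are maximally monotone with resolvents J_{γA}, J_{γB}, and a monotone μ-Lipschitz map C : ℝ² → ℝ², with zer(A + B + C) = {x : 0 ∈ A x + B x + C x} nonempty, such that for every z₀ ∈ ℝ² with z₀ ≠ 0 the FDRF iterates defined by x_{n+1} = J_{γB} z_n, y_{n+1} = J_{γA}(2x_{n+1} − z_n − γ C x_{n+1}), z_{n+1} = z_n + y_{n+1} − x_{n+1} − γ(C y_{n+1} − C x_{n+1}) satisfy ‖z_n‖ → ∞ and ‖x_n‖ → ∞ as n → ∞. -/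
open RealInnerProductSpace Pointwise Filter

noncomputable section FdrfAux

abbrev E2 := EuclideanSpace ℝ (Fin 2)

def rot2 (v : E2) : E2 := WithLp.toLp 2 ![-v 1, v 0]

lemma rot2_apply0 (v : E2) : rot2 v 0 = -v 1 := rfl
lemma rot2_apply1 (v : E2) : rot2 v 1 = v 0 := rfl

lemma inner_rot2 (v : E2) : ⟪v, rot2 v⟫ = 0 := by
  simp [PiLp.inner_apply, RCLike.inner_apply, Fin.sum_univ_two, rot2_apply0, rot2_apply1]
  ring

lemma norm_rot2 (v : E2) : ‖rot2 v‖ = ‖v‖ := by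
  rw [EuclideanSpace.norm_eq, EuclideanSpace.norm_eq]
  simp [Fin.sum_univ_two, rot2_apply0, rot2_apply1, Real.norm_eq_abs, sq_abs]
  ring_nf

lemma rot2_sub (x y : E2) : rot2 x - rot2 y = rot2 (x - y) := by
  ext i
  fin_cases i <;> simp [rot2, PiLp.sub_apply] <;> ring

lemma rot2_zero : rot2 0 = 0 := by
  ext i
  fin_cases i <;> simp [rot2]

lemma fdrf_step (γ : ℝ) (hγ : 0 < γ) (w : E2) :
    (w + ((2 : ℝ) • w - w - γ • ((2/γ) • rot2 w)) - w
      - γ • ((2/γ) • rot2 ((2 : ℝ) • w - w - γ • ((2/γ) • rot2 w))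
          - (2/γ) • rot2 w)) = (-3 : ℝ) • w - (2 : ℝ) • rot2 w := by
  have hne : γ ≠ 0 := ne_of_gt hγ
  ext i
  fin_cases i <;>
    simp [rot2, PiLp.add_apply, PiLp.sub_apply, PiLp.smul_apply, smul_eq_mul] <;>
    field_simp <;> ring

lemma fdrf_norm_step (w : E2) :
    ‖(-3 : ℝ) • w - (2 : ℝ) • rot2 w‖ = Real.sqrt 13 * ‖w‖ := by
  rw [EuclideanSpace.norm_eq, EuclideanSpace.norm_eq,
    ← Real.sqrt_mul (by norm_num : (13:ℝ) ≥ 0)]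
  congr 1
  simp [Fin.sum_univ_two, rot2_apply0, rot2_apply1, PiLp.sub_apply, PiLp.smul_apply,
    Real.norm_eq_abs, sq_abs, smul_eq_mul]
  ring

end FdrfAux

theorem fdrf_stmt13 (γ : ℝ) (hγ : 0 < γ) :
    ∃ μ : ℝ, 0 < μ ∧
    ∃ (A B : EuclideanSpace ℝ (Fin 2) → Set (EuclideanSpace ℝ (Fin 2)))
      (JA JB C : EuclideanSpace ℝ (Fin 2) → EuclideanSpace ℝ (Fin 2)),
      (∀ x y u v, u ∈ A x → v ∈ A y → 0 ≤ ⟪x - y, u - v⟫) ∧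
      (∀ x u, (∀ y v, v ∈ A y → 0 ≤ ⟪x - y, u - v⟫) → u ∈ A x) ∧
      (∀ x y u v, u ∈ B x → v ∈ B y → 0 ≤ ⟪x - y, u - v⟫) ∧
      (∀ x u, (∀ y v, v ∈ B y → 0 ≤ ⟪x - y, u - v⟫) → u ∈ B x) ∧
      (∀ x, x - JA x ∈ γ • A (JA x)) ∧
      (∀ x, x - JB x ∈ γ • B (JB x)) ∧
      (∀ x y, 0 ≤ ⟪x - y, C x - C y⟫) ∧
      (∀ x y, ‖C x - C y‖ ≤ μ * ‖x - y‖) ∧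
      (∃ x, (0 : EuclideanSpace ℝ (Fin 2)) ∈ A x + B x + ({C x} : Set (EuclideanSpace ℝ (Fin 2)))) ∧
      ∀ z x y : ℕ → EuclideanSpace ℝ (Fin 2), z 0 ≠ 0 →
        (∀ n, x (n + 1) = JB (z n)) →
        (∀ n, y (n + 1) = JA ((2 : ℝ) • x (n + 1) - z n - γ • C (x (n + 1)))) →
        (∀ n, z (n + 1) = z n + y (n + 1) - x (n + 1)
            - γ • (C (y (n + 1)) - C (x (n + 1)))) →
        Tendsto (fun n => ‖z n‖) atTop atTop ∧ Tendsto (fun n => ‖x n‖) atTop atTop := by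
  have hne : γ ≠ 0 := ne_of_gt hγ
  refine ⟨2/γ, by positivity, fun _ => {0}, fun _ => {0}, id, id,
    fun v => (2/γ) • rot2 v, ?_, ?_, ?_, ?_, ?_, ?_, ?_, ?_, ?_, ?_⟩
  · intro x y u v hu hv
    simp only [Set.mem_singleton_iff] at hu hv
    simp [hu, hv]
  · intro x u h
    have h1 := h (x + u) 0 rfl
    rw [sub_zero, show x - (x + u) = -u by abel, inner_neg_left,
      real_inner_self_eq_norm_sq] at h1
    have hu : ‖u‖ = 0 := by nlinarith [norm_nonneg u]
    simpa using norm_eq_zero.mp hu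
  · intro x y u v hu hv
    simp only [Set.mem_singleton_iff] at hu hv
    simp [hu, hv]
  · intro x u h
    have h1 := h (x + u) 0 rfl
    rw [sub_zero, show x - (x + u) = -u by abel, inner_neg_left,
      real_inner_self_eq_norm_sq] at h1
    have hu : ‖u‖ = 0 := by nlinarith [norm_nonneg u]
    simpa using norm_eq_zero.mp hu
  · intro x
    simp [Set.smul_set_singleton]
  · intro x
    simp [Set.smul_set_singleton]
  · intro x y
    have : ((2/γ) • rot2 x - (2/γ) • rot2 y) = (2/γ) • rot2 (x - y) := by
      rw [← smul_sub, rot2_sub]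
    rw [this, real_inner_smul_right, inner_rot2]
    simp
  · intro x y
    have : ((2/γ) • rot2 x - (2/γ) • rot2 y) = (2/γ) • rot2 (x - y) := by
      rw [← smul_sub, rot2_sub]
    rw [this, norm_smul, norm_rot2]
    have : |2/γ| = 2/γ := abs_of_pos (by positivity)
    rw [Real.norm_eq_abs, this]
  · refine ⟨0, ?_⟩
    simp [Set.singleton_add_singleton, rot2_zero]
  · intro z x y hz0 hx hy hz
    have hzz : ∀ n, z (n + 1) = (-3 : ℝ) • z n - (2 : ℝ) • rot2 (z n) := by
      intro n
      have hy' : y (n + 1) = (2 : ℝ) • z n - z n - γ • ((2/γ) • rot2 (z n)) := by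
        rw [hy n, hx n]; rfl
      rw [hz n, hy', hx n]
      exact fdrf_step γ hγ (z n)
    have hnorm : ∀ n, ‖z n‖ = Real.sqrt 13 ^ n * ‖z 0‖ := by
      intro n
      induction n with
      | zero => simp
      | succ k ih =>
        rw [hzz k, fdrf_norm_step, ih, pow_succ]
        ring
    have h13 : (1:ℝ) < Real.sqrt 13 := by
      rw [show (1:ℝ) = Real.sqrt 1 by simp]
      exact Real.sqrt_lt_sqrt (by norm_num) (by norm_num)
    have hz0' : 0 < ‖z 0‖ := norm_pos_iff.mpr hz0
    have hzt : Tendsto (fun n => ‖z n‖) atTop atTop := by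
      have := (tendsto_pow_atTop_atTop_of_one_lt h13).atTop_mul_const hz0'
      exact this.congr fun n => (hnorm n).symm
    refine ⟨hzt, ?_⟩
    rw [← tendsto_add_atTop_iff_nat 1]
    refine hzt.congr fun n => ?_
    rw [hx n]; rfl
end

section
/- Let H be a real Hilbert space, let A, B : H → Set H be maximally monotone with resolvents J_{βA}, J_{γB}, let C : H → H be monotone and μ-Lipschitz with μ > 0, and assume zer(A + B + C) = {x : 0 ∈ A x + B x + C x} is nonempty. Let β > 0 and 0 < γ < β/(1 + 2μβ). Given x₀, x₋₁, u₀ ∈ H, define for n ≥ 0: x_{n+1} = J_{γB}(x_n − γ u_n − γ(2 C x_n − C x_{n−1})), y_{n+1} = J_{βA}(2x_{n+1} − x_n + β u_n), u_{n+1} = u_n + (1/β)(2x_{n+1} − x_n − y_{n+1}). Then (x_n) converges weakly to some x⋆ ∈ zer(A + B + C). -/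
set_option maxHeartbeats 1000000

open RealInnerProductSpace Pointwise Filter Topology
/-- Every norm-bounded sequence in a real Hilbert space has a weak limit along
any ultrafilter. -/
lemma exists_ultra_weak_limit {H : Type*} [NormedAddCommGroup H] [InnerProductSpace ℝ H]
    [CompleteSpace H] (z : ℕ → H) (M : ℝ) (hM : ∀ n, ‖z n‖ ≤ M) (U : Ultrafilter ℕ) :
    ∃ xs : H, ∀ w : H, Tendsto (fun n => ⟪z n, w⟫) (U : Filter ℕ) (𝓝 ⟪xs, w⟫) := by
  have hM0 : 0 ≤ M := le_trans (norm_nonneg _) (hM 0)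
  -- limit function
  have hex : ∀ w : H, ∃ L : ℝ, Tendsto (fun n => ⟪z n, w⟫) (U : Filter ℕ) (𝓝 L) := by
    intro w
    have hmem : ∀ n, ⟪z n, w⟫ ∈ Set.Icc (-(M * ‖w‖)) (M * ‖w‖) := by
      intro n
      have h1 : |⟪z n, w⟫| ≤ ‖z n‖ * ‖w‖ := abs_real_inner_le_norm _ _
      have h2 : ‖z n‖ * ‖w‖ ≤ M * ‖w‖ := by
        exact mul_le_mul_of_nonneg_right (hM n) (norm_nonneg w)
      constructor <;> [linarith [abs_le.mp (h1.trans h2)]; linarith [(abs_le.mp (h1.trans h2)).2]]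
    obtain ⟨L, _, hL⟩ := (isCompact_Icc (a := -(M * ‖w‖)) (b := M * ‖w‖)).ultrafilter_le_nhds
      (U.map fun n => ⟪z n, w⟫) (by
        simp only [Ultrafilter.coe_map, le_principal_iff, mem_map]
        exact Filter.mem_of_superset Filter.univ_mem (fun nn _ => Set.mem_preimage.mpr (hmem _)))
    exact ⟨L, hL⟩
  choose φ hφ using hex
  have hadd : ∀ w₁ w₂, φ (w₁ + w₂) = φ w₁ + φ w₂ := by
    intro w₁ w₂
    have h1 : Tendsto (fun n => ⟪z n, w₁ + w₂⟫) (U : Filter ℕ) (𝓝 (φ w₁ + φ w₂)) := by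
      have := (hφ w₁).add (hφ w₂)
      simpa [inner_add_right] using this
    exact tendsto_nhds_unique (hφ _) h1
  have hsmul : ∀ (c : ℝ) w, φ (c • w) = c * φ w := by
    intro c w
    have h1 : Tendsto (fun n => ⟪z n, c • w⟫) (U : Filter ℕ) (𝓝 (c * φ w)) := by
      have := (hφ w).const_mul c
      simpa [real_inner_smul_right] using this
    exact tendsto_nhds_unique (hφ _) h1
  have hbound : ∀ w, ‖φ w‖ ≤ M * ‖w‖ := by
    intro w
    have h1 : Tendsto (fun n => |⟪z n, w⟫|) (U : Filter ℕ) (𝓝 |φ w|) := (hφ w).abs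
    have h2 : ∀ n, |⟪z n, w⟫| ≤ M * ‖w‖ := fun n =>
      (abs_real_inner_le_norm _ _).trans (mul_le_mul_of_nonneg_right (hM n) (norm_nonneg w))
    have := le_of_tendsto h1 (Eventually.of_forall h2)
    simpa [Real.norm_eq_abs] using this
  let φL : H →L[ℝ] ℝ := LinearMap.mkContinuous
    { toFun := φ, map_add' := hadd, map_smul' := hsmul } M hbound
  refine ⟨(InnerProductSpace.toDual ℝ H).symm φL, fun w => ?_⟩
  have : ⟪(InnerProductSpace.toDual ℝ H).symm φL, w⟫ = φL w := InnerProductSpace.toDual_symm_apply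
  rw [this]
  exact hφ w

lemma fdrf_demi_identity {H : Type*} [NormedAddCommGroup H] [InnerProductSpace ℝ H]
    (X Un Yn yt v y' v'' d : H) :
    ⟪Yn - yt, Un - v⟫ + ⟪X - y', d - Un - v''⟫
      = (⟪Un, y' - yt⟫ - ⟪X, v⟫ + ⟪yt, v⟫ - ⟪X, v''⟫ + ⟪y', v''⟫)
        + (⟪Yn - X, Un - v⟫ + ⟪X - y', d⟫) := by
  have c1 : ⟪yt, Un⟫ = ⟪Un, yt⟫ := real_inner_comm _ _
  have c2 : ⟪y', Un⟫ = ⟪Un, y'⟫ := real_inner_comm _ _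
  have c3 : ⟪Yn, Un⟫ = ⟪Un, Yn⟫ := real_inner_comm _ _
  have c4 : ⟪X, Un⟫ = ⟪Un, X⟫ := real_inner_comm _ _
  simp only [inner_sub_left, inner_sub_right, c1, c2, c3, c4]
  ring

noncomputable def fdrfV {H : Type*} [NormedAddCommGroup H] [InnerProductSpace ℝ H]
    (γ β μ : ℝ) (C : H → H) (x u : ℕ → H) (z ub : H) (n : ℕ) : ℝ :=
  ‖x (n+1) - z‖^2/2 + (γ*β/2)*‖u n - ub‖^2 - γ*⟪x (n+1) - z, u n - ub⟫
    - γ*⟪x (n+1) - z, C (x (n+1)) - C (x n)⟫ + (γ*μ/2)*‖x (n+1) - x n‖^2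

lemma fdrf_key_identity {H : Type*} [NormedAddCommGroup H] [InnerProductSpace ℝ H]
    (γ β : ℝ) (hβ : β ≠ 0) (p P w W e E : H) :
    ⟪P, p - P⟫ - γ * ⟪P, w⟫ + γ * ⟪P, E⟫ - γ * ⟪P, e⟫ + γ * ⟪(2:ℝ) • P - p, W⟫
      - γ * β * ⟪W - w, W⟫
    = (‖p‖^2/2 + (γ*β/2)*‖w‖^2 - γ*⟪p, w⟫ - γ*⟪p, e⟫)
      - (‖P‖^2/2 + (γ*β/2)*‖W‖^2 - γ*⟪P, W⟫ - γ*⟪P, E⟫)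
      - (1/2)*(1 - γ/β)*‖P - p‖^2 - (γ*β/2)*‖(W - w) - (1/β) • (P - p)‖^2
      - γ*⟪P - p, e⟫ := by
  have c1 : ⟪p, P⟫ = ⟪P, p⟫ := real_inner_comm _ _
  have c2 : ⟪W, P⟫ = ⟪P, W⟫ := real_inner_comm _ _
  have c3 : ⟪w, P⟫ = ⟪P, w⟫ := real_inner_comm _ _
  have c4 : ⟪E, P⟫ = ⟪P, E⟫ := real_inner_comm _ _
  have c5 : ⟪e, P⟫ = ⟪P, e⟫ := real_inner_comm _ _
  have c6 : ⟪W, p⟫ = ⟪p, W⟫ := real_inner_comm _ _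
  have c7 : ⟪w, p⟫ = ⟪p, w⟫ := real_inner_comm _ _
  have c8 : ⟪E, p⟫ = ⟪p, E⟫ := real_inner_comm _ _
  have c9 : ⟪e, p⟫ = ⟪p, e⟫ := real_inner_comm _ _
  have c10 : ⟪w, W⟫ = ⟪W, w⟫ := real_inner_comm _ _
  have c11 : ⟪E, W⟫ = ⟪W, E⟫ := real_inner_comm _ _
  have c12 : ⟪e, W⟫ = ⟪W, e⟫ := real_inner_comm _ _
  have c13 : ⟪E, w⟫ = ⟪w, E⟫ := real_inner_comm _ _
  have c14 : ⟪e, w⟫ = ⟪w, e⟫ := real_inner_comm _ _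
  have c15 : ⟪e, E⟫ = ⟪E, e⟫ := real_inner_comm _ _
  simp only [← real_inner_self_eq_norm_sq, inner_sub_left, inner_sub_right,
    inner_add_left, inner_add_right, real_inner_smul_left, real_inner_smul_right,
    c1, c2, c3, c4, c5, c6, c7, c8, c9, c10, c11, c12, c13, c14, c15]
  field_simp
  ring

lemma fdrf_descent {H : Type*} [NormedAddCommGroup H] [InnerProductSpace ℝ H]
    (A B : H → Set H) (C : H → H)
    (hAmono : ∀ x y u v : H, u ∈ A x → v ∈ A y → 0 ≤ ⟪x - y, u - v⟫)
    (hBmono : ∀ x y u v : H, u ∈ B x → v ∈ B y → 0 ≤ ⟪x - y, u - v⟫)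
    (hCmono : ∀ x y : H, 0 ≤ ⟪x - y, C x - C y⟫)
    (μ β γ : ℝ) (hμ : 0 < μ) (hβ : 0 < β) (hγ0 : 0 < γ)
    (hClip : ∀ x y : H, ‖C x - C y‖ ≤ μ * ‖x - y‖)
    (x y u : ℕ → H)
    (hbb : ∀ n, γ⁻¹ • (x (n+1) - γ•u n - γ•((2:ℝ)•C (x (n+1)) - C (x n)) - x (n+2)) ∈ B (x (n+2)))
    (hAmem : ∀ n, u (n+1) ∈ A (y (n+1)))
    (hyf : ∀ n, y (n+1) = (2:ℝ)•x (n+2) - x (n+1) - β•(u (n+1) - u n))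
    (z ub : H) (hA : ub ∈ A z) (hB : -ub - C z ∈ B z) (n : ℕ) :
    fdrfV γ β μ C x u z ub (n+1) + ((1 - γ/β - 2*γ*μ)/2)*‖x (n+2) - x (n+1)‖^2
      + (γ*β/2)*‖(u (n+1) - u n) - (1/β)•(x (n+2) - x (n+1))‖^2
      ≤ fdrfV γ β μ C x u z ub n := by
  set P := x (n+2) - z with hPdef
  set p := x (n+1) - z with hpdef
  set w := u n - ub with hwdef
  set W := u (n+1) - ub with hWdef
  set e := C (x (n+1)) - C (x n) with hedef
  set E := C (x (n+2)) - C (x (n+1)) with hEdef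
  set CC := C (x (n+2)) - C z with hCCdef
  set bbn := γ⁻¹ • (x (n+1) - γ•u n - γ•((2:ℝ)•C (x (n+1)) - C (x n)) - x (n+2)) with hbdef
  have hγ' : γ ≠ 0 := ne_of_gt hγ0
  have hβ' : β ≠ 0 := ne_of_gt hβ
  -- monotonicity inequalities
  have h1 : 0 ≤ ⟪P, bbn - (-ub - C z)⟫ := hBmono _ _ _ _ (hbb n) hB
  have h1' : 0 ≤ ⟪P, γ • (bbn - (-ub - C z))⟫ := by
    rw [real_inner_smul_right]; exact mul_nonneg hγ0.le h1
  have hvec1 : γ • (bbn - (-ub - C z)) = (p - P) - γ•w - γ•(CC - E + e) := by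
    rw [hbdef, smul_sub, smul_inv_smul₀ hγ']
    rw [hPdef, hpdef, hwdef, hCCdef, hEdef, hedef]
    module
  have e1 : ⟪P, γ • (bbn - (-ub - C z))⟫
      = ⟪P, p - P⟫ - γ*⟪P, w⟫ - γ*⟪P, CC⟫ + γ*⟪P, E⟫ - γ*⟪P, e⟫ := by
    rw [hvec1]
    simp only [inner_sub_right, inner_add_right, real_inner_smul_right]
    ring
  have h2 : 0 ≤ ⟪y (n+1) - z, u (n+1) - ub⟫ := hAmono _ _ _ _ (hAmem n) hA
  have hvec2 : y (n+1) - z = ((2:ℝ)•P - p) - β•(W - w) := by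
    rw [hyf n, hPdef, hpdef, hWdef, hwdef]; module
  have h2' : 0 ≤ γ*(⟪(2:ℝ)•P - p, W⟫ - β*⟪W - w, W⟫) := by
    apply mul_nonneg hγ0.le
    have h2e : ⟪y (n+1) - z, u (n+1) - ub⟫ = ⟪(2:ℝ)•P - p, W⟫ - β*⟪W - w, W⟫ := by
      rw [hvec2, ← hWdef]
      simp only [inner_sub_left, real_inner_smul_left]
      try ring
    rw [← h2e]
    exact h2
  have h3 : 0 ≤ γ*⟪P, CC⟫ := mul_nonneg hγ0.le (hCmono _ _)
  -- combined inequality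
  have htot : 0 ≤ ⟪P, p - P⟫ - γ * ⟪P, w⟫ + γ * ⟪P, E⟫ - γ * ⟪P, e⟫
      + γ * ⟪(2:ℝ) • P - p, W⟫ - γ * β * ⟪W - w, W⟫ := by
    have h1'' := h1'
    rw [e1] at h1''
    have hr : γ*(⟪(2:ℝ)•P - p, W⟫ - β*⟪W - w, W⟫)
        = γ*⟪(2:ℝ)•P - p, W⟫ - γ*β*⟪W - w, W⟫ := by ring
    linarith [h2', h3, h1'', hr.le, hr.ge]
  rw [fdrf_key_identity γ β hβ' p P w W e E] at htot
  -- Cauchy-Schwarz / Lipschitz bound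
  have hPp : P - p = x (n+2) - x (n+1) := by rw [hPdef, hpdef]; abel
  have hWw : W - w = u (n+1) - u n := by rw [hWdef, hwdef]; abel
  have h4 : |⟪P - p, e⟫| ≤ ‖P - p‖ * ‖e‖ := abs_real_inner_le_norm _ _
  have h5 : ‖e‖ ≤ μ * ‖x (n+1) - x n‖ := hClip _ _
  have h6 : -(γ * ⟪P - p, e⟫) ≤ (γ*μ/2) * (‖P - p‖^2 + ‖x (n+1) - x n‖^2) := by
    have hn1 : (0:ℝ) ≤ ‖P - p‖ := norm_nonneg _
    have hn2 : (0:ℝ) ≤ ‖x (n+1) - x n‖ := norm_nonneg _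
    have h7 : -⟪P - p, e⟫ ≤ ‖P - p‖ * (μ * ‖x (n+1) - x n‖) := by
      have := (abs_le.mp h4).1
      nlinarith [mul_le_mul_of_nonneg_left h5 hn1]
    nlinarith [mul_le_mul_of_nonneg_left h7 hγ0.le,
      mul_nonneg (mul_nonneg hγ0.le hμ.le) (sq_nonneg (‖P - p‖ - ‖x (n+1) - x n‖))]
  -- conclude
  simp only [fdrfV, ← hPdef, ← hpdef, ← hwdef, ← hWdef, ← hedef, ← hEdef]
  rw [← hPp, ← hWw]
  have hco : ((1 - γ/β - 2*γ*μ)/2)*‖P - p‖^2 + (γ*μ/2)*‖P - p‖^2 + (γ*μ/2)*‖P - p‖^2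
      = (1/2)*(1 - γ/β)*‖P - p‖^2 := by ring
  linarith [htot, h6]

lemma fdrf_Vpos {H : Type*} [NormedAddCommGroup H] [InnerProductSpace ℝ H]
    (C : H → H) (μ β γ : ℝ) (hμ : 0 < μ) (hβ : 0 < β) (hγ0 : 0 < γ)
    (hγβ : γ * (1 + 2*μ*β) < β)
    (hClip : ∀ x y : H, ‖C x - C y‖ ≤ μ * ‖x - y‖)
    (x u : ℕ → H) (z ub : H) (n : ℕ) :
    min ((1 - γ*μ - γ*((1/β + (1 - γ*μ)/γ)/2))/2) (γ*(β - 1/((1/β + (1 - γ*μ)/γ)/2))/2)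
        * (‖x (n+1) - z‖^2 + ‖u n - ub‖^2)
      ≤ fdrfV γ β μ C x u z ub n := by
  set t := (1/β + (1 - γ*μ)/γ)/2 with htdef
  set P := ‖x (n+1) - z‖ with hP
  set W := ‖u n - ub‖ with hW
  set Q := ‖x (n+1) - x n‖ with hQ
  have hμγ : γ*μ < 1/2 := by nlinarith
  have h1β : 1/β < (1 - γ*μ)/γ := by
    rw [div_lt_div_iff₀ hβ hγ0]
    nlinarith [mul_pos (mul_pos hγ0 hμ) hβ]
  have ht0 : 0 < t := by
    rw [htdef]; have : 0 < 1/β := by positivity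
    nlinarith
  have htu : γ*t < 1 - γ*μ := by
    rw [htdef]
    have h2 : t < (1 - γ*μ)/γ := by rw [htdef]; linarith
    calc γ*((1/β + (1 - γ*μ)/γ)/2) < γ*((1 - γ*μ)/γ) := by
          apply mul_lt_mul_of_pos_left _ hγ0
          linarith
      _ = 1 - γ*μ := by field_simp
  have htl : 1/t < β := by
    rw [div_lt_iff₀ ht0]
    rw [htdef]
    have : γ*((1/β + (1 - γ*μ)/γ)/2) < 1 - γ*μ := htu
    have h3 : 1/β*β = 1 := by field_simp
    nlinarith [mul_lt_mul_of_pos_right h1β hβ]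
  -- bounds on inner products
  have g1 : γ*⟪x (n+1) - z, u n - ub⟫ ≤ γ*(t*P^2 + W^2/t)/2 := by
    have hcs : ⟪x (n+1) - z, u n - ub⟫ ≤ P*W := real_inner_le_norm _ _
    have : P*W ≤ (t*P^2 + W^2/t)/2 := by
      have hid : (t*P^2 + W^2/t)/2 - P*W = (t*P - W)^2/(2*t) := by
        field_simp; ring
      nlinarith [div_nonneg (sq_nonneg (t*P - W)) (by linarith : (0:ℝ) ≤ 2*t)]
    nlinarith [mul_le_mul_of_nonneg_left (hcs.trans this) hγ0.le]
  have g2 : γ*⟪x (n+1) - z, C (x (n+1)) - C (x n)⟫ ≤ γ*μ/2*(P^2 + Q^2) := by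
    have hcs : ⟪x (n+1) - z, C (x (n+1)) - C (x n)⟫ ≤ P*‖C (x (n+1)) - C (x n)‖ :=
      real_inner_le_norm _ _
    have h5 : ‖C (x (n+1)) - C (x n)‖ ≤ μ*Q := hClip _ _
    have hP0 : (0:ℝ) ≤ P := norm_nonneg _
    have : ⟪x (n+1) - z, C (x (n+1)) - C (x n)⟫ ≤ μ*(P*Q) := by
      nlinarith [mul_le_mul_of_nonneg_left h5 hP0]
    nlinarith [sq_nonneg (P - Q), mul_nonneg hγ0.le hμ.le,
      mul_le_mul_of_nonneg_left this hγ0.le,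
      mul_nonneg (mul_nonneg hγ0.le hμ.le) (sq_nonneg (P - Q))]
  -- final
  have hQ0 : (0:ℝ) ≤ Q^2 := sq_nonneg _
  have hP2 : (0:ℝ) ≤ P^2 := sq_nonneg _
  have hW2 : (0:ℝ) ≤ W^2 := sq_nonneg _
  have hmin1 : min ((1 - γ*μ - γ*t)/2) (γ*(β - 1/t)/2) ≤ (1 - γ*μ - γ*t)/2 := min_le_left _ _
  have hmin2 : min ((1 - γ*μ - γ*t)/2) (γ*(β - 1/t)/2) ≤ γ*(β - 1/t)/2 := min_le_right _ _
  have hexp : (1 - γ*μ - γ*t)/2*P^2 + γ*(β - 1/t)/2*W^2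
      ≤ P^2/2 + (γ*β/2)*W^2 - γ*(t*P^2 + W^2/t)/2 - γ*μ/2*(P^2 + Q^2) + (γ*μ/2)*Q^2 := by
    have ht' : 1/t*t = 1 := by field_simp
    have : γ*(β - 1/t)/2*W^2 = γ*β/2*W^2 - γ/(2*t)*W^2 := by field_simp
    have h2 : γ*(t*P^2 + W^2/t)/2 = γ*t/2*P^2 + γ/(2*t)*W^2 := by field_simp
    nlinarith []
  unfold fdrfV
  rw [← hP, ← hW, ← hQ]
  nlinarith [mul_le_mul_of_nonneg_right hmin1 hP2, mul_le_mul_of_nonneg_right hmin2 hW2, g1, g2, hexp]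


lemma fdrf_G_diff_identity {H : Type*} [NormedAddCommGroup H] [InnerProductSpace ℝ H]
    (γ β : ℝ) (X Uv a b a' b' : H) :
    (‖X - a‖^2/2 + (γ*β/2)*‖Uv - b‖^2 - γ*⟪X - a, Uv - b⟫)
      - (‖X - a'‖^2/2 + (γ*β/2)*‖Uv - b'‖^2 - γ*⟪X - a', Uv - b'⟫)
    = -⟪X, a - a'⟫ - γ*β*⟪Uv, b - b'⟫ + γ*⟪X, b - b'⟫ + γ*⟪Uv, a - a'⟫
      + ((‖a‖^2 - ‖a'‖^2)/2 + (γ*β/2)*(‖b‖^2 - ‖b'‖^2) - γ*(⟪a, b⟫ - ⟪a', b'⟫)) := by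
  have c1 : ⟪a, X⟫ = ⟪X, a⟫ := real_inner_comm _ _
  have c2 : ⟪a', X⟫ = ⟪X, a'⟫ := real_inner_comm _ _
  have c3 : ⟪b, Uv⟫ = ⟪Uv, b⟫ := real_inner_comm _ _
  have c4 : ⟪b', Uv⟫ = ⟪Uv, b'⟫ := real_inner_comm _ _
  have c5 : ⟪b, X⟫ = ⟪X, b⟫ := real_inner_comm _ _
  have c6 : ⟪b', X⟫ = ⟪X, b'⟫ := real_inner_comm _ _
  have c7 : ⟪a, Uv⟫ = ⟪Uv, a⟫ := real_inner_comm _ _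
  have c8 : ⟪a', Uv⟫ = ⟪Uv, a'⟫ := real_inner_comm _ _
  have c9 : ⟪b, a⟫ = ⟪a, b⟫ := real_inner_comm _ _
  have c10 : ⟪b', a'⟫ = ⟪a', b'⟫ := real_inner_comm _ _
  simp only [← real_inner_self_eq_norm_sq, inner_sub_left, inner_sub_right,
    c1, c2, c3, c4, c5, c6, c7, c8, c9, c10]
  ring

lemma fdrf_two_zero (γ β D E I : ℝ) (hγ0 : 0 < γ) (hγβ : γ < β) (hD : 0 ≤ D) (hE : 0 ≤ E)
    (h5 : D^2 + γ*β*E^2 = 2*γ*I) (h6 : I ≤ D*E) : E = 0 ∧ D = 0 := by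
  have hE2 : E^2 ≤ 0 := by
    nlinarith [sq_nonneg (D - γ*E), mul_pos hγ0 (sub_pos.mpr hγβ),
      mul_le_mul_of_nonneg_left h6 (by positivity : (0:ℝ) ≤ 2*γ)]
  have hE0 : E = 0 := by
    have h8 : E^2 = 0 := le_antisymm hE2 (sq_nonneg E)
    exact sq_eq_zero_iff.mp h8
  subst hE0
  have hD2 : D^2 ≤ 0 := by nlinarith [mul_nonneg hγ0.le hD]
  have hD0 : D = 0 := sq_eq_zero_iff.mp (le_antisymm hD2 (sq_nonneg D))
  exact ⟨rfl, hD0⟩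
/-- FRDR convergence. Here `x n` denotes the paper's `x_{n-1}` (so `x 0 = x₋₁`,
`x 1 = x₀`), while `u n` and `y n` match the paper's `u_n` and `y_n`. -/
theorem fdrf_stmt14 {H : Type*} [NormedAddCommGroup H] [InnerProductSpace ℝ H] [CompleteSpace H]
    (A B : H → Set H)
    (hAmono : ∀ x y u v : H, u ∈ A x → v ∈ A y → 0 ≤ ⟪x - y, u - v⟫)
    (hAmax : ∀ x u : H, (∀ y v : H, v ∈ A y → 0 ≤ ⟪x - y, u - v⟫) → u ∈ A x)
    (hBmono : ∀ x y u v : H, u ∈ B x → v ∈ B y → 0 ≤ ⟪x - y, u - v⟫)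
    (hBmax : ∀ x u : H, (∀ y v : H, v ∈ B y → 0 ≤ ⟪x - y, u - v⟫) → u ∈ B x)
    (μ β γ : ℝ) (hμ : 0 < μ) (hβ : 0 < β) (hγ0 : 0 < γ) (hγ : γ < β / (1 + 2 * μ * β))
    (JA JB : H → H)
    (hJA : ∀ x : H, x - JA x ∈ β • A (JA x))
    (hJB : ∀ x : H, x - JB x ∈ γ • B (JB x))
    (C : H → H)
    (hCmono : ∀ x y : H, 0 ≤ ⟪x - y, C x - C y⟫)
    (hClip : ∀ x y : H, ‖C x - C y‖ ≤ μ * ‖x - y‖)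
    (hzer : ∃ x : H, (0 : H) ∈ A x + B x + ({C x} : Set H))
    (x y u : ℕ → H)
    (hx : ∀ n, x (n + 2) = JB (x (n + 1) - γ • u n - γ • ((2 : ℝ) • C (x (n + 1)) - C (x n))))
    (hy : ∀ n, y (n + 1) = JA ((2 : ℝ) • x (n + 2) - x (n + 1) + β • u n))
    (hu : ∀ n, u (n + 1) = u n + (1 / β) • ((2 : ℝ) • x (n + 2) - x (n + 1) - y (n + 1))) :
    ∃ xs : H, (0 : H) ∈ A xs + B xs + ({C xs} : Set H) ∧
      ∀ w : H, Tendsto (fun n => ⟪x n, w⟫) atTop (𝓝 ⟪xs, w⟫) := by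
  have hγ' : γ ≠ 0 := ne_of_gt hγ0
  have hβ' : β ≠ 0 := ne_of_gt hβ
  rw [lt_div_iff₀ (by positivity : (0:ℝ) < 1 + 2*μ*β)] at hγ
  -- hγ : γ * (1 + 2*μ*β) < β
  have hγltβ : γ < β := by nlinarith [mul_pos (mul_pos hγ0 hμ) hβ]
  -- unpack a zero of the sum
  obtain ⟨zs, hzs⟩ := hzer
  rw [Set.mem_add] at hzs
  obtain ⟨s1, hs1, s2, hs2, hsum⟩ := hzs
  rw [Set.mem_add] at hs1
  obtain ⟨a1, ha1, a2, ha2, rfl⟩ := hs1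
  rw [Set.mem_singleton_iff] at hs2
  subst hs2
  have hBz : -a1 - C zs ∈ B zs := by
    have : a2 = -a1 - C zs := by
      have : a1 + a2 + C zs = 0 := hsum
      linear_combination (norm := abel) this
    rwa [← this]
  -- memberships along the iteration
  have hbb : ∀ n, γ⁻¹ • (x (n+1) - γ•u n - γ•((2:ℝ)•C (x (n+1)) - C (x n)) - x (n+2))
      ∈ B (x (n+2)) := by
    intro n
    have h := hJB (x (n+1) - γ•u n - γ•((2:ℝ)•C (x (n+1)) - C (x n)))
    rw [← hx n, Set.mem_smul_set_iff_inv_smul_mem₀ hγ'] at h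
    exact h
  have hAmem : ∀ n, u (n+1) ∈ A (y (n+1)) := by
    intro n
    have h := hJA ((2:ℝ)•x (n+2) - x (n+1) + β•u n)
    rw [← hy n, Set.mem_smul_set_iff_inv_smul_mem₀ hβ'] at h
    have he : β⁻¹ • ((2:ℝ)•x (n+2) - x (n+1) + β•u n - y (n+1)) = u (n+1) := by
      rw [hu n]
      match_scalars <;> field_simp
    rwa [he] at h
  have hyf : ∀ n, y (n+1) = (2:ℝ)•x (n+2) - x (n+1) - β•(u (n+1) - u n) := by
    intro n
    rw [hu n]
    match_scalars <;> field_simp <;> ring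
  -- constants for coercivity
  set t := (1/β + (1 - γ*μ)/γ)/2 with htdef
  set α := min ((1 - γ*μ - γ*t)/2) (γ*(β - 1/t)/2) with hαdef
  have hμβ : 0 < γ*μ*β := mul_pos (mul_pos hγ0 hμ) hβ
  have hμγ : γ*μ < 1/2 := by nlinarith
  have h1β : 1/β < (1 - γ*μ)/γ := by
    rw [div_lt_div_iff₀ hβ hγ0]; nlinarith
  have ht0 : 0 < t := by
    rw [htdef]
    have h1 : 0 < 1/β := by positivity
    nlinarith
  have hc1 : 0 < (1 - γ*μ - γ*t)/2 := by
    have h2 : t < (1 - γ*μ)/γ := by rw [htdef]; linarith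
    have h3 : γ*((1 - γ*μ)/γ) = 1 - γ*μ := by field_simp
    nlinarith [mul_lt_mul_of_pos_left h2 hγ0]
  have hc2 : 0 < γ*(β - 1/t)/2 := by
    have h4 : 1/t < β := by
      rw [div_lt_iff₀ ht0, htdef]
      have h3 : 1/β*β = 1 := by field_simp
      nlinarith [mul_lt_mul_of_pos_right h1β hβ]
    have : 0 < β - 1/t := by linarith
    positivity
  have hα : 0 < α := lt_min hc1 hc2
  have hVpos : ∀ (z ub : H) (n : ℕ),
      α * (‖x (n+1) - z‖^2 + ‖u n - ub‖^2) ≤ fdrfV γ β μ C x u z ub n := by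
    intro z ub n
    have h := fdrf_Vpos C μ β γ hμ hβ hγ0 hγ hClip x u z ub n
    rw [← htdef, ← hαdef] at h
    exact h
  have hstep : ∀ (z ub : H), ub ∈ A z → -ub - C z ∈ B z → ∀ n,
      fdrfV γ β μ C x u z ub (n+1) + ((1 - γ/β - 2*γ*μ)/2)*‖x (n+2) - x (n+1)‖^2
        + (γ*β/2)*‖(u (n+1) - u n) - (1/β)•(x (n+2) - x (n+1))‖^2
        ≤ fdrfV γ β μ C x u z ub n :=
    fun z ub hA hB n => fdrf_descent A B C hAmono hBmono hCmono μ β γ hμ hβ hγ0 hClip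
      x y u hbb hAmem hyf z ub hA hB n
  have hε : 0 < (1 - γ/β - 2*γ*μ)/2 := by
    have : γ/β < 1 - 2*γ*μ := by rw [div_lt_iff₀ hβ]; nlinarith
    linarith
  have hVconv : ∀ (z ub : H), ub ∈ A z → -ub - C z ∈ B z →
      ∃ L, Tendsto (fun n => fdrfV γ β μ C x u z ub n) atTop (𝓝 L) := by
    intro z ub hA hB
    have hanti : Antitone (fun n => fdrfV γ β μ C x u z ub n) := by
      apply antitone_nat_of_succ_le
      intro n
      have h := hstep z ub hA hB n
      have h1 : 0 ≤ ((1 - γ/β - 2*γ*μ)/2)*‖x (n+2) - x (n+1)‖^2 :=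
        mul_nonneg hε.le (sq_nonneg _)
      have h2 : 0 ≤ (γ*β/2)*‖(u (n+1) - u n) - (1/β)•(x (n+2) - x (n+1))‖^2 :=
        mul_nonneg (by positivity) (sq_nonneg _)
      linarith
    have hbdd : BddBelow (Set.range fun n => fdrfV γ β μ C x u z ub n) := by
      refine ⟨0, ?_⟩
      rintro _ ⟨n, rfl⟩
      have h := hVpos z ub n
      nlinarith [sq_nonneg ‖x (n+1) - z‖, sq_nonneg ‖u n - ub‖]
    exact ⟨_, tendsto_atTop_ciInf hanti hbdd⟩
  -- apply it with the given solution pair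
  obtain ⟨L0, hL0⟩ := hVconv zs a1 ha1 hBz
  have hdiff : Tendsto (fun n => fdrfV γ β μ C x u zs a1 n - fdrfV γ β μ C x u zs a1 (n+1))
      atTop (𝓝 0) := by
    have hL0' : Tendsto (fun n => fdrfV γ β μ C x u zs a1 (n+1)) atTop (𝓝 L0) :=
      (tendsto_add_atTop_iff_nat 1).mpr hL0
    simpa using hL0.sub hL0'
  have hterm2nonneg : ∀ n, (0:ℝ) ≤ (γ*β/2)*‖(u (n+1) - u n) - (1/β)•(x (n+2) - x (n+1))‖^2 :=
    fun n => mul_nonneg (by positivity) (sq_nonneg _)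
  have hterm1nonneg : ∀ n, (0:ℝ) ≤ ((1 - γ/β - 2*γ*μ)/2)*‖x (n+2) - x (n+1)‖^2 :=
    fun n => mul_nonneg hε.le (sq_nonneg _)
  have hdx2 : Tendsto (fun n => ‖x (n+2) - x (n+1)‖^2) atTop (𝓝 0) := by
    have h1 : Tendsto (fun n => ((1 - γ/β - 2*γ*μ)/2) * ‖x (n+2) - x (n+1)‖^2) atTop (𝓝 0) := by
      apply squeeze_zero (fun n => hterm1nonneg n) (fun n => ?_) hdiff
      have h := hstep zs a1 ha1 hBz n
      linarith [hterm2nonneg n]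
    have h2 := h1.const_mul (((1 - γ/β - 2*γ*μ)/2)⁻¹)
    rw [mul_zero] at h2
    refine h2.congr fun n => ?_
    rw [← mul_assoc, inv_mul_cancel₀ hε.ne', one_mul]
  have hsu2 : Tendsto (fun n => ‖(u (n+1) - u n) - (1/β)•(x (n+2) - x (n+1))‖^2) atTop (𝓝 0) := by
    have h1 : Tendsto (fun n => (γ*β/2) * ‖(u (n+1) - u n) - (1/β)•(x (n+2) - x (n+1))‖^2)
        atTop (𝓝 0) := by
      apply squeeze_zero (fun n => hterm2nonneg n) (fun n => ?_) hdiff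
      have h := hstep zs a1 ha1 hBz n
      linarith [hterm1nonneg n]
    have h2 := h1.const_mul ((γ*β/2)⁻¹)
    rw [mul_zero] at h2
    refine h2.congr fun n => ?_
    rw [← mul_assoc, inv_mul_cancel₀ (by positivity : (γ*β/2) ≠ 0), one_mul]
  have norm_sq_to_vec : ∀ (f : ℕ → H), Tendsto (fun n => ‖f n‖^2) atTop (𝓝 0) →
      Tendsto f atTop (𝓝 0) := by
    intro f hf
    rw [tendsto_zero_iff_norm_tendsto_zero]
    have h1 : Tendsto (fun n => Real.sqrt (‖f n‖^2)) atTop (𝓝 (Real.sqrt 0)) :=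
      (Real.continuous_sqrt.tendsto _).comp hf
    rw [Real.sqrt_zero] at h1
    refine h1.congr fun n => ?_
    rw [Real.sqrt_sq (norm_nonneg _)]
  have hdx : Tendsto (fun n => x (n+2) - x (n+1)) atTop (𝓝 0) := norm_sq_to_vec _ hdx2
  have hsu : Tendsto (fun n => (u (n+1) - u n) - (1/β)•(x (n+2) - x (n+1))) atTop (𝓝 0) :=
    norm_sq_to_vec _ hsu2
  have hdu : Tendsto (fun n => u (n+1) - u n) atTop (𝓝 0) := by
    have h1 := hsu.add (hdx.const_smul (1/β))
    simp only [smul_zero, add_zero, zero_add] at h1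
    refine h1.congr fun n => ?_
    abel
  -- boundedness of the iterates
  have hanti0 : Antitone (fun n => fdrfV γ β μ C x u zs a1 n) := by
    apply antitone_nat_of_succ_le
    intro n
    have h := hstep zs a1 ha1 hBz n
    linarith [hterm1nonneg n, hterm2nonneg n]
  have hxb' : ∀ n, ‖x (n+1) - zs‖^2 ≤ fdrfV γ β μ C x u zs a1 0 / α := by
    intro n
    rw [le_div_iff₀ hα]
    have h1 := hVpos zs a1 n
    have h2 : fdrfV γ β μ C x u zs a1 n ≤ fdrfV γ β μ C x u zs a1 0 := hanti0 (Nat.zero_le n)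
    nlinarith [mul_nonneg hα.le (sq_nonneg ‖u n - a1‖)]
  have hub' : ∀ n, ‖u n - a1‖^2 ≤ fdrfV γ β μ C x u zs a1 0 / α := by
    intro n
    rw [le_div_iff₀ hα]
    have h1 := hVpos zs a1 n
    have h2 : fdrfV γ β μ C x u zs a1 n ≤ fdrfV γ β μ C x u zs a1 0 := hanti0 (Nat.zero_le n)
    nlinarith [mul_nonneg hα.le (sq_nonneg ‖x (n+1) - zs‖)]
  have sq_bound : ∀ (r Bd : ℝ), 0 ≤ r → r^2 ≤ Bd → r ≤ max 1 Bd := by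
    intro r Bd hr h
    rcases le_or_gt r 1 with h1 | h1
    · exact le_trans h1 (le_max_left _ _)
    · have h2 : r ≤ r^2 := by nlinarith
      exact le_trans (h2.trans h) (le_max_right _ _)
  set Mx := max (max 1 (fdrfV γ β μ C x u zs a1 0 / α) + ‖zs‖) ‖x 0‖ with hMxdef
  have hxb : ∀ n, ‖x n‖ ≤ Mx := by
    intro n
    cases n with
    | zero => exact le_max_right _ _
    | succ m =>
      have h1 : ‖x (m+1) - zs‖ ≤ max 1 (fdrfV γ β μ C x u zs a1 0 / α) :=
        sq_bound _ _ (norm_nonneg _) (hxb' m)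
      have h2 : ‖x (m+1)‖ - ‖zs‖ ≤ ‖x (m+1) - zs‖ := norm_sub_norm_le _ _
      refine le_trans ?_ (le_max_left _ _)
      linarith
  set Mu := max 1 (fdrfV γ β μ C x u zs a1 0 / α) + ‖a1‖ with hMudef
  have hub : ∀ n, ‖u n‖ ≤ Mu := by
    intro n
    have h1 : ‖u n - a1‖ ≤ max 1 (fdrfV γ β μ C x u zs a1 0 / α) :=
      sq_bound _ _ (norm_nonneg _) (hub' n)
    have h2 : ‖u n‖ - ‖a1‖ ≤ ‖u n - a1‖ := norm_sub_norm_le _ _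
    rw [hMudef]
    linarith
  -- more vanishing sequences
  have hdx1 : Tendsto (fun n => x (n+1) - x n) atTop (𝓝 0) :=
    (tendsto_add_atTop_iff_nat 1).mp hdx
  have hyx : Tendsto (fun n => y (n+1) - x (n+2)) atTop (𝓝 0) := by
    have h1 := hdx.sub (hdu.const_smul β)
    simp only [smul_zero, sub_zero] at h1
    refine h1.congr fun n => ?_
    rw [hyf n]
    module
  have hCd : ∀ (k : ℕ) , Tendsto (fun n => x (n+k+1) - x (n+k)) atTop (𝓝 0) → Tendsto (fun n => C (x (n+k+1)) - C (x (n+k))) atTop (𝓝 0) := by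
    intro k hk
    apply squeeze_zero_norm (fun n => (hClip (x (n+k+1)) (x (n+k))))
    have h1 := hk.norm
    rw [norm_zero] at h1
    simpa using h1.const_mul μ
  -- inner products against vanishing sequences
  have inner_vanish : ∀ (f : ℕ → H), Tendsto f atTop (𝓝 0) → ∀ w : H,
      Tendsto (fun n => ⟪f n, w⟫) atTop (𝓝 0) := by
    intro f hf w
    have h1 := hf.norm
    rw [norm_zero] at h1
    have h2 : Tendsto (fun n => ‖f n‖ * ‖w‖) atTop (𝓝 0) := by simpa using h1.mul_const ‖w‖
    exact squeeze_zero_norm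
      (fun n => by rw [Real.norm_eq_abs]; exact abs_real_inner_le_norm _ _) h2
  -- every ultrafilter weak limit point is a solution pair
  have hweak : ∀ (U : Ultrafilter ℕ), (U : Filter ℕ) ≤ atTop →
      ∃ xs us : H, (∀ w, Tendsto (fun n => ⟪x (n+1), w⟫) (U : Filter ℕ) (𝓝 ⟪xs, w⟫)) ∧
        (∀ w, Tendsto (fun n => ⟪u n, w⟫) (U : Filter ℕ) (𝓝 ⟪us, w⟫)) ∧
        us ∈ A xs ∧ -us - C xs ∈ B xs := by
    intro U hU
    obtain ⟨xs, hwx⟩ := exists_ultra_weak_limit (fun n => x (n+1)) Mx (fun n => hxb (n+1)) U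
    obtain ⟨us, hwu⟩ := exists_ultra_weak_limit u Mu hub U
    have hwx2 : ∀ w, Tendsto (fun n => ⟪x (n+2), w⟫) (U : Filter ℕ) (𝓝 ⟪xs, w⟫) := by
      intro w
      have h0 := (inner_vanish _ hdx w).mono_left hU
      have h1 := (hwx w).add h0
      rw [add_zero] at h1
      refine h1.congr fun n => ?_
      rw [← inner_add_left]
      congr 1
      abel
    have hwu1 : ∀ w, Tendsto (fun n => ⟪u (n+1), w⟫) (U : Filter ℕ) (𝓝 ⟪us, w⟫) := by
      intro w
      have h0 := (inner_vanish _ hdu w).mono_left hU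
      have h1 := (hwu w).add h0
      rw [add_zero] at h1
      refine h1.congr fun n => ?_
      rw [← inner_add_left]
      congr 1
      abel
    -- test points from the resolvents at the weak limit
    set pA := xs + β • us with hpAdef
    set yt := JA pA with hytdef
    set v := β⁻¹ • (pA - yt) with hvdef
    have hvA : v ∈ A yt := by
      have h := hJA pA
      rw [Set.mem_smul_set_iff_inv_smul_mem₀ hβ'] at h
      exact h
    set pB := xs - γ • us - γ • C xs with hpBdef
    set y' := JB pB with hy'def
    set v' := γ⁻¹ • (pB - y') with hv'def
    have hvB : v' ∈ B y' := by
      have h := hJB pB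
      rw [Set.mem_smul_set_iff_inv_smul_mem₀ hγ'] at h
      exact h
    -- the vanishing defect sequence
    set bb : ℕ → H := fun n =>
      γ⁻¹ • (x (n+1) - γ•u n - γ•((2:ℝ)•C (x (n+1)) - C (x n)) - x (n+2)) with hbbdef
    have hbb' : ∀ n, bb n ∈ B (x (n+2)) := fun n => hbb n
    set δs : ℕ → H := fun n => u (n+1) + bb n + C (x (n+2)) with hδdef
    have hδ : Tendsto δs atTop (𝓝 0) := by
      have hid : ∀ n, δs n = (β⁻¹ - γ⁻¹) • (x (n+2) - x (n+1)) - β⁻¹ • (y (n+1) - x (n+2))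
          + ((C (x (n+2)) - C (x (n+1))) - (C (x (n+1)) - C (x n))) := by
        intro n
        simp only [hδdef, hbbdef]
        rw [hu n]
        match_scalars <;> (field_simp; try ring)
      have b1 := hdx.const_smul (β⁻¹ - γ⁻¹)
      rw [smul_zero] at b1
      have b2 := hyx.const_smul β⁻¹
      rw [smul_zero] at b2
      have b3 := hCd 1 hdx
      have b4 := hCd 0 hdx1
      have bigT := (b1.sub b2).add (b3.sub b4)
      simp only [sub_zero, add_zero] at bigT
      exact Tendsto.congr (fun n => (hid n).symm) bigT
    -- nonnegative sequence from monotonicity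
    set g : ℕ → ℝ := fun n => ⟪y (n+1) - yt, u (n+1) - v⟫ + ⟪x (n+2) - y', bb n - v'⟫
      + ⟪x (n+2) - y', C (x (n+2)) - C y'⟫ with hgdef
    have hg : ∀ n, 0 ≤ g n := by
      intro n
      have t1 := hAmono (y (n+1)) yt (u (n+1)) v (hAmem n) hvA
      have t2 := hBmono (x (n+2)) y' (bb n) v' (hbb' n) hvB
      have t3 := hCmono (x (n+2)) y'
      simp only [hgdef]
      linarith
    set hfun : ℕ → ℝ := fun n => ⟪u (n+1), y' - yt⟫ - ⟪x (n+2), v⟫ + ⟪yt, v⟫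
      - ⟪x (n+2), v' + C y'⟫ + ⟪y', v' + C y'⟫ with hhdef
    set r : ℕ → ℝ := fun n => ⟪y (n+1) - x (n+2), u (n+1) - v⟫ + ⟪x (n+2) - y', δs n⟫ with hrdef
    have hdecomp : ∀ n, g n = hfun n + r n := by
      intro n
      have hb2 : bb n - v' + (C (x (n+2)) - C y') = δs n - u (n+1) - (v' + C y') := by
        simp only [hδdef]; abel
      have hdi := fdrf_demi_identity (x (n+2)) (u (n+1)) (y (n+1)) yt v y' (v' + C y') (δs n)
      simp only [hgdef, hhdef, hrdef]
      rw [add_assoc, ← inner_add_right, hb2]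
      exact hdi
    have hr0 : Tendsto r atTop (𝓝 0) := by
      have hbnd : ∀ n, |r n| ≤ ‖y (n+1) - x (n+2)‖ * (Mu + ‖v‖) + ‖δs n‖ * (Mx + ‖y'‖) := by
        intro n
        simp only [hrdef]
        have e1 : |⟪y (n+1) - x (n+2), u (n+1) - v⟫| ≤ ‖y (n+1) - x (n+2)‖ * (Mu + ‖v‖) := by
          refine (abs_real_inner_le_norm _ _).trans ?_
          apply mul_le_mul_of_nonneg_left _ (norm_nonneg _)
          refine (norm_sub_le _ _).trans ?_
          have := hub (n+1); linarith
        have e2 : |⟪x (n+2) - y', δs n⟫| ≤ ‖δs n‖ * (Mx + ‖y'‖) := by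
          refine (abs_real_inner_le_norm _ _).trans ?_
          rw [mul_comm]
          apply mul_le_mul_of_nonneg_left _ (norm_nonneg _)
          refine (norm_sub_le _ _).trans ?_
          have := hxb (n+2); linarith
        exact (abs_add_le _ _).trans (by linarith)
      have htd : Tendsto (fun n => ‖y (n+1) - x (n+2)‖ * (Mu + ‖v‖) + ‖δs n‖ * (Mx + ‖y'‖))
          atTop (𝓝 0) := by
        have b1 := hyx.norm
        rw [norm_zero] at b1
        have b2 := hδ.norm
        rw [norm_zero] at b2
        have := (b1.mul_const (Mu + ‖v‖)).add (b2.mul_const (Mx + ‖y'‖))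
        simpa using this
      exact squeeze_zero_norm (fun n => by rw [Real.norm_eq_abs]; exact hbnd n) htd
    have hhU : Tendsto hfun (U : Filter ℕ) (𝓝 (⟪us, y' - yt⟫ - ⟪xs, v⟫ + ⟪yt, v⟫
        - ⟪xs, v' + C y'⟫ + ⟪y', v' + C y'⟫)) := by
      simp only [hhdef]
      exact ((((hwu1 (y' - yt)).sub (hwx2 v)).add tendsto_const_nhds).sub
        (hwx2 (v' + C y'))).add tendsto_const_nhds
    have hΞ : 0 ≤ ⟪us, y' - yt⟫ - ⟪xs, v⟫ + ⟪yt, v⟫ - ⟪xs, v' + C y'⟫ + ⟪y', v' + C y'⟫ := by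
      have hgU := hhU.add (hr0.mono_left hU)
      rw [add_zero] at hgU
      have hgU' : Tendsto g (U : Filter ℕ) (𝓝 (⟪us, y' - yt⟫ - ⟪xs, v⟫ + ⟪yt, v⟫
          - ⟪xs, v' + C y'⟫ + ⟪y', v' + C y'⟫)) :=
        Tendsto.congr (fun n => (hdecomp n).symm) hgU
      exact ge_of_tendsto' hgU' hg
    -- identify the limit expression with the two pairings
    have hXi : ⟪us, y' - yt⟫ - ⟪xs, v⟫ + ⟪yt, v⟫ - ⟪xs, v' + C y'⟫ + ⟪y', v' + C y'⟫
        = ⟪xs - yt, us - v⟫ + ⟪xs - y', -us - (v' + C y')⟫ := by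
      have c1 : ⟪yt, us⟫ = ⟪us, yt⟫ := real_inner_comm _ _
      have c2 : ⟪y', us⟫ = ⟪us, y'⟫ := real_inner_comm _ _
      simp only [inner_sub_left, inner_sub_right, inner_neg_left, inner_neg_right,
        inner_add_right, c1, c2]
      ring
    rw [hXi] at hΞ
    -- resolvent identities
    have hbv : β • v = pA - yt := by rw [hvdef, smul_inv_smul₀ hβ']
    have hxyt : xs - yt = β • (v - us) := by
      rw [smul_sub, hbv, hpAdef]; abel
    set q := v' + us + C xs with hqdef
    have hgv : γ • v' = pB - y' := by rw [hv'def, smul_inv_smul₀ hγ']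
    have hxy' : xs - y' = γ • q := by
      rw [hqdef, smul_add, smul_add, hgv, hpBdef]; abel
    have h1 : ⟪xs - yt, us - v⟫ = -(β * ‖us - v‖^2) := by
      rw [hxyt, real_inner_smul_left, ← neg_sub us v, inner_neg_left,
        real_inner_self_eq_norm_sq]
      ring
    have h2 : ⟪xs - y', -us - (v' + C y')⟫ = γ * (-‖q‖^2 + ⟪q, C xs - C y'⟫) := by
      have hsp : -us - (v' + C y') = -q + (C xs - C y') := by rw [hqdef]; abel
      rw [hxy', hsp, real_inner_smul_left, inner_add_right, inner_neg_right,
        real_inner_self_eq_norm_sq]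
      try ring
    have h4 : ‖xs - y'‖ = γ * ‖q‖ := by
      rw [hxy', norm_smul, Real.norm_eq_abs, abs_of_pos hγ0]
    have h3 : ⟪q, C xs - C y'⟫ ≤ μ * γ * ‖q‖^2 := by
      calc ⟪q, C xs - C y'⟫ ≤ ‖q‖ * ‖C xs - C y'‖ := real_inner_le_norm _ _
        _ ≤ ‖q‖ * (μ * ‖xs - y'‖) :=
            mul_le_mul_of_nonneg_left (hClip _ _) (norm_nonneg _)
        _ = μ * γ * ‖q‖^2 := by rw [h4]; ring
    rw [h1, h2] at hΞ
    -- both defects vanish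
    have hΞ' : 0 ≤ -(β*‖us - v‖^2) - γ*‖q‖^2 + γ*⟪q, C xs - C y'⟫ := by
      have hr : γ * (-‖q‖^2 + ⟪q, C xs - C y'⟫)
          = -(γ*‖q‖^2) + γ*⟪q, C xs - C y'⟫ := by ring
      linarith [hΞ, hr.le, hr.ge]
    have hγI : γ*⟪q, C xs - C y'⟫ ≤ γ*(μ*γ*‖q‖^2) := mul_le_mul_of_nonneg_left h3 hγ0.le
    have hpos : 0 < γ - γ*(μ*γ) := by nlinarith [mul_pos hγ0 hγ0]
    have hq0 : ‖q‖^2 = 0 ∧ ‖us - v‖^2 = 0 := by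
      constructor
      · refine le_antisymm ?_ (sq_nonneg _)
        nlinarith [hΞ', hγI, mul_nonneg hβ.le (sq_nonneg ‖us - v‖), hpos]
      · refine le_antisymm ?_ (sq_nonneg _)
        nlinarith [hΞ', hγI, mul_nonneg hpos.le (sq_nonneg ‖q‖), hβ]
    have husv : us = v := by
      have := hq0.2
      rw [sq_eq_zero_iff, norm_eq_zero, sub_eq_zero] at this
      exact this
    have hqz : q = 0 := by
      have := hq0.1
      rw [sq_eq_zero_iff, norm_eq_zero] at this
      exact this
    have hy'xs : y' = xs := by
      have h5 : xs - y' = 0 := by rw [hxy', hqz, smul_zero]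
      exact (sub_eq_zero.mp h5).symm
    have hytxs : yt = xs := by
      have h5 : xs - yt = 0 := by rw [hxyt, ← husv, sub_self, smul_zero]
      exact (sub_eq_zero.mp h5).symm
    refine ⟨xs, us, hwx, hwu, ?_, ?_⟩
    · rw [← hytxs, husv]
      exact hvA
    · have h0 : v' + us + C xs = 0 := by rw [← hqdef]; exact hqz
      have hv'eq : v' = -us - C xs := by
        calc v' = v' + us + C xs - us - C xs := by abel
          _ = 0 - us - C xs := by rw [h0]
          _ = -us - C xs := by abel
      rw [← hv'eq, ← hy'xs]
      exact hvB
  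
  -- conclusion
  obtain ⟨xs, us, hwx0, hwu0, hAxs, hBxs⟩ := hweak (Ultrafilter.of atTop) (Ultrafilter.of_le _)
  refine ⟨xs, ?_, ?_⟩
  · have h0 : us + (-us - C xs) + C xs = 0 := by abel
    rw [← h0]
    exact Set.add_mem_add (Set.add_mem_add hAxs hBxs) rfl
  · intro w
    rw [tendsto_iff_ultrafilter]
    intro V hV
    obtain ⟨xs', us', hwx', hwu', hAxs', hBxs'⟩ := hweak V hV
    -- convergence of the quadratic quantity for any solution pair
    have hG : ∀ z ub : H, ub ∈ A z → -ub - C z ∈ B z →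
        ∃ L, Tendsto (fun n => ‖x (n+1) - z‖^2/2 + (γ*β/2)*‖u n - ub‖^2
          - γ*⟪x (n+1) - z, u n - ub⟫) atTop (𝓝 L) := by
      intro z ub hAz' hBz'
      obtain ⟨L, hL⟩ := hVconv z ub hAz' hBz'
      have hA1 : Tendsto (fun n => γ*⟪x (n+1) - z, C (x (n+1)) - C (x n)⟫) atTop (𝓝 0) := by
        have hb : ∀ n, |⟪x (n+1) - z, C (x (n+1)) - C (x n)⟫|
            ≤ (Mx + ‖z‖)*(μ*‖x (n+1) - x n‖) := by
          intro n
          refine (abs_real_inner_le_norm _ _).trans ?_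
          have b1 : ‖x (n+1) - z‖ ≤ Mx + ‖z‖ :=
            (norm_sub_le _ _).trans (by linarith [hxb (n+1)])
          exact mul_le_mul b1 (hClip _ _) (norm_nonneg _) (by positivity)
        have ht2 : Tendsto (fun n => (Mx + ‖z‖)*(μ*‖x (n+1) - x n‖)) atTop (𝓝 0) := by
          have b2 := hdx1.norm
          rw [norm_zero] at b2
          have := (b2.const_mul μ).const_mul (Mx + ‖z‖)
          simpa using this
        have h0 := squeeze_zero_norm
          (fun n => by rw [Real.norm_eq_abs]; exact hb n) ht2
        have := h0.const_mul γ
        simpa using this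
      have hA2 : Tendsto (fun n => (γ*μ/2)*‖x (n+1) - x n‖^2) atTop (𝓝 0) := by
        have hQ2 : Tendsto (fun n => ‖x (n+1) - x n‖^2) atTop (𝓝 0) :=
          (tendsto_add_atTop_iff_nat 1).mp hdx2
        have := hQ2.const_mul (γ*μ/2)
        simpa using this
      have hextra : Tendsto (fun n => -(γ*⟪x (n+1) - z, C (x (n+1)) - C (x n)⟫)
          + (γ*μ/2)*‖x (n+1) - x n‖^2) atTop (𝓝 0) := by
        have := hA1.neg.add hA2
        simpa using this
      have hsub := hL.sub hextra
      rw [sub_zero] at hsub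
      refine ⟨L, hsub.congr fun n => ?_⟩
      simp only [fdrfV]
      ring
    obtain ⟨L1, hL1⟩ := hG xs us hAxs hBxs
    obtain ⟨L2, hL2⟩ := hG xs' us' hAxs' hBxs'
    have hD := hL1.sub hL2
    have hD' : Tendsto (fun n => -⟪x (n+1), xs - xs'⟫ - γ*β*⟪u n, us - us'⟫
        + γ*⟪x (n+1), us - us'⟫ + γ*⟪u n, xs - xs'⟫
        + ((‖xs‖^2 - ‖xs'‖^2)/2 + (γ*β/2)*(‖us‖^2 - ‖us'‖^2) - γ*(⟪xs, us⟫ - ⟪xs', us'⟫)))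
        atTop (𝓝 (L1 - L2)) :=
      Tendsto.congr (fun n => fdrf_G_diff_identity γ β (x (n+1)) (u n) xs us xs' us') hD
    have hlim : ∀ (W : Ultrafilter ℕ), (W : Filter ℕ) ≤ atTop → ∀ (a b : H),
        (∀ w', Tendsto (fun n => ⟪x (n+1), w'⟫) (W : Filter ℕ) (𝓝 ⟪a, w'⟫)) →
        (∀ w', Tendsto (fun n => ⟪u n, w'⟫) (W : Filter ℕ) (𝓝 ⟪b, w'⟫)) →
        L1 - L2 = -⟪a, xs - xs'⟫ - γ*β*⟪b, us - us'⟫ + γ*⟪a, us - us'⟫ + γ*⟪b, xs - xs'⟫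
          + ((‖xs‖^2 - ‖xs'‖^2)/2 + (γ*β/2)*(‖us‖^2 - ‖us'‖^2)
            - γ*(⟪xs, us⟫ - ⟪xs', us'⟫)) := by
      intro W hW a b hwa hwb
      have h1 := ((((hwa (xs - xs')).neg.sub ((hwb (us - us')).const_mul (γ*β))).add
        ((hwa (us - us')).const_mul γ)).add ((hwb (xs - xs')).const_mul γ)).add
        (tendsto_const_nhds (x := ((‖xs‖^2 - ‖xs'‖^2)/2 + (γ*β/2)*(‖us‖^2 - ‖us'‖^2)
          - γ*(⟪xs, us⟫ - ⟪xs', us'⟫))) (f := (W : Filter ℕ)))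
      exact tendsto_nhds_unique (hD'.mono_left hW) h1
    have e1 := hlim (Ultrafilter.of atTop) (Ultrafilter.of_le _) xs us hwx0 hwu0
    have e2 := hlim V hV xs' us' hwx' hwu'
    have k1 : ⟪xs, xs - xs'⟫ - ⟪xs', xs - xs'⟫ = ‖xs - xs'‖^2 := by
      rw [← inner_sub_left, real_inner_self_eq_norm_sq]
    have k2 : ⟪us, us - us'⟫ - ⟪us', us - us'⟫ = ‖us - us'‖^2 := by
      rw [← inner_sub_left, real_inner_self_eq_norm_sq]
    have k3 : ⟪xs, us - us'⟫ - ⟪xs', us - us'⟫ = ⟪xs - xs', us - us'⟫ := by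
      rw [← inner_sub_left]
    have k4 : ⟪us, xs - xs'⟫ - ⟪us', xs - xs'⟫ = ⟪xs - xs', us - us'⟫ := by
      rw [← inner_sub_left, real_inner_comm]
    have k2' : γ*β*⟪us, us - us'⟫ - γ*β*⟪us', us - us'⟫ = γ*β*‖us - us'‖^2 := by
      linear_combination (γ*β) * k2
    have k3' : γ*⟪xs, us - us'⟫ - γ*⟪xs', us - us'⟫ = γ*⟪xs - xs', us - us'⟫ := by
      linear_combination γ * k3
    have k4' : γ*⟪us, xs - xs'⟫ - γ*⟪us', xs - xs'⟫ = γ*⟪xs - xs', us - us'⟫ := by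
      linear_combination γ * k4
    have h5 : ‖xs - xs'‖^2 + γ*β*‖us - us'‖^2 = 2*γ*⟪xs - xs', us - us'⟫ := by
      linarith [e1, e2, k1, k2', k3', k4']
    have h6' : ⟪xs - xs', us - us'⟫ ≤ ‖xs - xs'‖*‖us - us'‖ := real_inner_le_norm _ _
    have h7 := fdrf_two_zero γ β ‖xs - xs'‖ ‖us - us'‖ ⟪xs - xs', us - us'⟫ hγ0 hγltβ
      (norm_nonneg _) (norm_nonneg _) h5 h6'
    have hxx : xs' = xs := by
      have h8 := h7.2
      rw [norm_eq_zero, sub_eq_zero] at h8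
      exact h8.symm
    have hfin : Tendsto (fun n => ⟪x (n+1), w⟫) (V : Filter ℕ) (𝓝 ⟪xs, w⟫) := by
      rw [← hxx]
      exact hwx' w
    have h0 := (inner_vanish _ hdx1 w).mono_left hV
    have h1 := hfin.sub h0
    rw [sub_zero] at h1
    refine h1.congr fun n => ?_
    rw [← inner_sub_left]
    congr 1
    abel
end

section
/- Let H be a real Hilbert space, let C : H → H be μ-Lipschitz with μ > 0, let β > 0 and 0 < γ < β/(1 + 2μβ). Then for all x, x₋, u, u₋, x⋆, u⋆ ∈ H, defining N(p, w) = (1/γ)‖p‖² − 2⟪p, w⟫ + β‖w‖² and V = N(x − x⋆, u − u⋆) + (1/2) N(x − x₋, u − u₋) + 2⟪C x − C x₋, x⋆ − x⟫, one has V ≥ (1/2) N(x − x⋆, u − u⋆). -/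
open RealInnerProductSpace

theorem fdrf_stmt17 {H : Type*} [NormedAddCommGroup H] [InnerProductSpace ℝ H] [CompleteSpace H]
    (C : H → H) (μ β γ : ℝ) (hμ : 0 < μ)
    (hClip : ∀ x y : H, ‖C x - C y‖ ≤ μ * ‖x - y‖)
    (hβ : 0 < β) (hγ0 : 0 < γ) (hγ : γ < β / (1 + 2 * μ * β))
    (N : H → H → ℝ)
    (hN : ∀ p w : H, N p w = (1 / γ) * ‖p‖ ^ 2 - 2 * ⟪p, w⟫ + β * ‖w‖ ^ 2) :
    ∀ x xm u um xs us : H,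
      (1 / 2) * N (x - xs) (u - us) ≤
        N (x - xs) (u - us) + (1 / 2) * N (x - xm) (u - um)
          + 2 * ⟪C x - C xm, xs - x⟫ := by
  have hden : (0:ℝ) < 1 + 2 * μ * β := by positivity
  have hγβ : γ * (1 + 2 * μ * β) < β := (lt_div_iff₀ hden).mp hγ
  have ha : 1 + 2 * μ * β ≤ β * (1 / γ) := by
    rw [mul_one_div, le_div_iff₀ hγ0]; nlinarith
  have key : ∀ p w : H, 2 * μ * ‖p‖ ^ 2 ≤ N p w := by
    intro p w
    rw [hN]
    have hip : ⟪p, w⟫ ≤ ‖p‖ * ‖w‖ := real_inner_le_norm p w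
    have h1 : 0 ≤ (‖p‖ - β * ‖w‖) ^ 2 := sq_nonneg _
    have h2 : 0 ≤ ‖p‖ := norm_nonneg _
    have h3 : 0 ≤ ‖w‖ := norm_nonneg _
    nlinarith [mul_le_mul_of_nonneg_left hip hβ.le, sq_nonneg ‖p‖,
      mul_le_mul_of_nonneg_right ha (sq_nonneg ‖p‖)]
  intro x xm u um xs us
  have hp1 := key (x - xs) (u - us)
  have hp2 := key (x - xm) (u - um)
  have hC := hClip x xm
  have hinner : -(‖C x - C xm‖ * ‖xs - x‖) ≤ ⟪C x - C xm, xs - x⟫ := by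
    have := abs_real_inner_le_norm (C x - C xm) (xs - x)
    linarith [neg_abs_le (⟪C x - C xm, xs - x⟫ : ℝ)]
  have hrev : ‖xs - x‖ = ‖x - xs‖ := norm_sub_rev _ _
  rw [hrev] at hinner
  nlinarith [sq_nonneg (‖x - xs‖ - ‖x - xm‖), norm_nonneg (x - xs), norm_nonneg (x - xm),
    mul_le_mul_of_nonneg_right hC (norm_nonneg (x - xs))]
end
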